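/- arXiv:1409.1031 — 8 statements merged into one kernel-verified Lean document; each statement's English description precedes it below -/
import Mathlib

section
/- If $X, Y, Z$ are integers satisfying $X^4 + X^2Y^2 + Y^4 = Z^2$, then $X = 0$ or $Y = 0$. -/
private lemma evsq {y : ℤ} (h : Even y) : Even (y ^ 2) := by
  obtain ⟨r, hr⟩ := h
  exact ⟨2 * r * r, by rw [hr]; ring⟩

private lemma osq {a : ℤ} (h : Odd a) : a ^ 2 % 4 = 1 := by
  obtain ⟨k, hk⟩ := h
  have h4 : a ^ 2 = 4 * (k * k + k) + 1 := by rw [hk]; ring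
  have key : ∀ j : ℤ, (4 * j + 1) % 4 = 1 := fun j => by omega
  rw [h4]; exact key _

private lemma cop2 {a : ℤ} (h : Odd a) : IsCoprime a 2 := by
  obtain ⟨k, hk⟩ := h
  exact ⟨1, -k, by rw [hk]; ring⟩

private lemma copsum {x y : ℤ} (h : IsCoprime x y) : IsCoprime (x ^ 2 + y ^ 2) (x * y) := by
  have h1 : IsCoprime (x ^ 2 + y ^ 2) x := by
    have h2 : IsCoprime (y ^ 2 + x * x) x := (h.symm.pow_left).add_mul_left_left x
    have h3 : x ^ 2 + y ^ 2 = y ^ 2 + x * x := by ring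
    rw [h3]; exact h2
  have h2 : IsCoprime (x ^ 2 + y ^ 2) y := by
    have h2 : IsCoprime (x ^ 2 + y * y) y := (h.pow_left).add_mul_left_left y
    have h3 : x ^ 2 + y ^ 2 = x ^ 2 + y * y := by ring
    rw [h3]; exact h2
  exact h1.mul_right h2

private lemma copint {a b : ℤ} (H : ∀ k : ℤ, k ∣ a → k ∣ b → IsUnit k) : IsCoprime a b := by
  rw [Int.isCoprime_iff_gcd_eq_one]
  have h := H (Int.gcd a b) (Int.gcd_dvd_left a b) (Int.gcd_dvd_right a b)
  rcases Int.isUnit_iff.mp h with h1 | h1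
  · exact_mod_cast h1
  · omega

private lemma core (N : ℕ)
    (IH : ∀ M : ℕ, M < N → ∀ x y z : ℤ, (x ^ 2 + y ^ 2).natAbs = M → IsCoprime x y →
      x ^ 4 + x ^ 2 * y ^ 2 + y ^ 4 = z ^ 2 → x = 0 ∨ y = 0)
    (x y l m : ℤ) (hN : (x ^ 2 + y ^ 2).natAbs = N)
    (hco : IsCoprime x y) (hlm : IsCoprime l m)
    (hxo : Odd x) (hye : Even y) (hx0 : x ≠ 0) (hy0 : y ≠ 0)
    (hlo : Odd l) (hme : Even m)
    (hsum : l ^ 2 + m ^ 2 = x ^ 2 + y ^ 2) (hprod : x * y = 2 * (l * m)) : False := by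
  have hl0 : l ≠ 0 := by
    rintro rfl
    have h0 : x * y = 0 := by linarith [hprod]
    rcases mul_eq_zero.mp h0 with h | h
    · exact hx0 h
    · exact hy0 h
  have hgpos : 0 < Int.gcd x l :=
    Nat.pos_of_ne_zero fun h => hx0 (Int.natAbs_eq_zero.mp (Nat.eq_zero_of_gcd_eq_zero_left h))
  obtain ⟨g, c, d, hg1, hcd1, hxe, hle⟩ := Int.exists_gcd_one' hgpos
  have hcd : IsCoprime c d := Int.isCoprime_iff_gcd_eq_one.mpr hcd1
  have hga : (0 : ℤ) < (g : ℤ) := by exact_mod_cast hg1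
  have hg0 : ((g : ℤ)) ≠ 0 := ne_of_gt hga
  obtain ⟨y1, hy1⟩ := hye
  subst hxe hle hy1
  have hc0 : c ≠ 0 := fun h => hx0 (by rw [h]; ring)
  have hd0 : d ≠ 0 := fun h => hl0 (by rw [h]; ring)
  -- cancel to get c * y1 = d * m
  have hcy : c * y1 = d * m := by
    have h2 : ((g : ℤ) * 2) * (c * y1) = ((g : ℤ) * 2) * (d * m) := by linear_combination hprod
    exact mul_left_cancel₀ (mul_ne_zero hg0 two_ne_zero) h2
  obtain ⟨e, he⟩ : c ∣ m := hcd.dvd_of_dvd_mul_left ⟨y1, hcy.symm⟩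
  subst he
  have hy1e : y1 = d * e := mul_left_cancel₀ hc0 (by linear_combination hcy)
  subst hy1e
  have he0 : e ≠ 0 := fun h => hy0 (by rw [h]; ring)
  -- parities
  have hcodd : Odd c := (Int.odd_mul.mp hxo).1
  have hgodd : Odd ((g : ℤ)) := (Int.odd_mul.mp hxo).2
  have hdodd : Odd d := (Int.odd_mul.mp hlo).1
  have heeven : Even e := by
    rcases Int.even_mul.mp hme with h | h
    · exact absurd hcodd (Int.not_odd_iff_even.mpr h)
    · exact h
  -- coprimality facts
  have hae : IsCoprime ((g : ℤ)) e :=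
    (hco.of_isCoprime_of_dvd_left ⟨c, by ring⟩).of_isCoprime_of_dvd_right ⟨d + d, by ring⟩
  have had : IsCoprime ((g : ℤ)) d :=
    (hco.of_isCoprime_of_dvd_left ⟨c, by ring⟩).of_isCoprime_of_dvd_right ⟨e + e, by ring⟩
  have hce : IsCoprime c e :=
    (hco.of_isCoprime_of_dvd_left ⟨(g : ℤ), by ring⟩).of_isCoprime_of_dvd_right ⟨d + d, by ring⟩
  have hde : IsCoprime d e :=
    (hlm.of_isCoprime_of_dvd_left ⟨(g : ℤ), by ring⟩).of_isCoprime_of_dvd_right ⟨c, by ring⟩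
  -- main algebraic identity
  obtain ⟨t, hT⟩ : ((g : ℤ)) ^ 2 ∣ (c ^ 2 - 4 * d ^ 2) :=
    (hae.pow (m := 2) (n := 2)).dvd_of_dvd_mul_left ⟨c ^ 2 - d ^ 2, by linear_combination hsum⟩
  have hE1 : c ^ 2 - d ^ 2 = e ^ 2 * t :=
    mul_left_cancel₀ (pow_ne_zero 2 hg0)
      (by linear_combination (-1 : ℤ) * hsum + e ^ 2 * hT)
  have h3d : t ∣ 3 * d ^ 2 := ⟨e ^ 2 - (g : ℤ) ^ 2, by linear_combination hE1 - hT⟩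
  have h3c : t ∣ 3 * c ^ 2 := ⟨4 * e ^ 2 - (g : ℤ) ^ 2, by linear_combination 4 * hE1 - hT⟩
  obtain ⟨r, w, hrw⟩ := (hcd.pow (m := 2) (n := 2))
  have ht3 : t ∣ 3 := by
    have h33 : (3 : ℤ) = r * (3 * c ^ 2) + w * (3 * d ^ 2) := by linear_combination (-3 : ℤ) * hrw
    have hd3 := dvd_add (Dvd.dvd.mul_left h3c r) (Dvd.dvd.mul_left h3d w)
    rwa [← h33] at hd3
  have htne : t ≠ 0 := by
    rintro rfl
    have hdd : d ^ 2 = 0 := by linarith [hE1, hT]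
    exact hd0 ((pow_eq_zero_iff (two_ne_zero)).mp hdd)
  have hle3 : t ≤ 3 := Int.le_of_dvd (by norm_num) ht3
  have hge3 : (-3 : ℤ) ≤ t := by
    have h := Int.le_of_dvd (show (0:ℤ) < 3 by norm_num) ((neg_dvd).mpr ht3)
    linarith
  interval_cases t
  · -- t = -3 : second descent
    have h31 : 3 * (d ^ 2 + e ^ 2) = 3 * ((g : ℤ) ^ 2) := by linear_combination hE1 - hT
    have hA1 : d ^ 2 + e ^ 2 = (g : ℤ) ^ 2 := by linarith
    have h32 : 3 * (c ^ 2 + 4 * e ^ 2) = 3 * ((g : ℤ) ^ 2) := by linear_combination 4 * hE1 - hT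
    have hA2 : c ^ 2 + 4 * e ^ 2 = (g : ℤ) ^ 2 := by linarith
    have PT1 : PythagoreanTriple c (2 * e) ((g : ℤ)) := by
      have h : c * c + (2 * e) * (2 * e) = (g : ℤ) * (g : ℤ) := by linear_combination hA2
      exact h
    have hgc2e : Int.gcd c (2 * e) = 1 :=
      Int.isCoprime_iff_gcd_eq_one.mp ((cop2 hcodd).mul_right hce)
    obtain ⟨p, q, hB1, hB2, hB3, _⟩ := PythagoreanTriple.coprime_classification.mp ⟨PT1, hgc2e⟩
    obtain ⟨hcp, hep⟩ : (c = p ^ 2 - q ^ 2 ∧ 2 * e = 2 * p * q) := by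
      rcases hB1 with h | ⟨h1, h2⟩
      · exact h
      · exact absurd hcodd (by rw [h1]; exact Int.not_odd_iff_even.mpr ⟨p * q, by ring⟩)
    have hepq : e = p * q := by linarith
    have PT2 : PythagoreanTriple d e ((g : ℤ)) := by
      have h : d * d + e * e = (g : ℤ) * (g : ℤ) := by linear_combination hA1
      exact h
    obtain ⟨m', n', hC1, hC2, hC3, _⟩ :=
      PythagoreanTriple.coprime_classification.mp ⟨PT2, Int.isCoprime_iff_gcd_eq_one.mp hde⟩
    obtain ⟨hdm, hem⟩ : (d = m' ^ 2 - n' ^ 2 ∧ e = 2 * m' * n') := by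
      rcases hC1 with h | ⟨h1, h2⟩
      · exact h
      · exact absurd hdodd (by rw [h1]; exact Int.not_odd_iff_even.mpr ⟨m' * n', by ring⟩)
    have hS : p ^ 2 + q ^ 2 = m' ^ 2 + n' ^ 2 := by
      rcases hB2 with hc1 | hc1 <;> rcases hC2 with hc2 | hc2
      · linarith
      · exfalso; apply hg0; rw [hc1]
        linarith [sq_nonneg p, sq_nonneg q, sq_nonneg m', sq_nonneg n']
      · exfalso; apply hg0; rw [hc1]
        linarith [sq_nonneg p, sq_nonneg q, sq_nonneg m', sq_nonneg n']
      · linarith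
    have hP : p * q = 2 * m' * n' := by rw [← hepq]; exact hem
    have hcopq : IsCoprime p q := Int.isCoprime_iff_gcd_eq_one.mpr hB3
    have heq' : p ^ 4 + p ^ 2 * q ^ 2 + q ^ 4 = (m' ^ 2 - n' ^ 2) ^ 2 := by
      linear_combination (p ^ 2 + q ^ 2 + m' ^ 2 + n' ^ 2) * hS - (p * q + 2 * m' * n') * hP
    have hpq0 : p * q ≠ 0 := by rw [← hepq]; exact he0
    have hpqpos : 0 < p ^ 2 + q ^ 2 := by
      obtain ⟨hp, hq⟩ := mul_ne_zero_iff.mp hpq0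
      have h2 : 0 < p ^ 2 := lt_of_le_of_ne (sq_nonneg p) (Ne.symm (pow_ne_zero 2 hp))
      linarith [sq_nonneg q]
    have hgsq : (g : ℤ) ^ 2 = (p ^ 2 + q ^ 2) ^ 2 := by
      rcases hB2 with h | h <;> rw [h] <;> ring
    have hclt : p ^ 2 + q ^ 2 ≤ (g : ℤ) ^ 2 := by
      rw [hgsq]
      have h1S : (1 : ℤ) ≤ p ^ 2 + q ^ 2 := by
        have := Int.lt_iff_add_one_le.mp hpqpos; linarith
      have hmul := mul_le_mul_of_nonneg_left h1S (by linarith : (0:ℤ) ≤ p ^ 2 + q ^ 2)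
      have hsq : ((p:ℤ) ^ 2 + q ^ 2) * (p ^ 2 + q ^ 2) = (p ^ 2 + q ^ 2) ^ 2 := by ring
      linarith [hmul, hsq]
    have hc1' : (1 : ℤ) ≤ c ^ 2 := by
      have h0 : 0 < c ^ 2 := lt_of_le_of_ne (sq_nonneg c) (Ne.symm (pow_ne_zero 2 hc0))
      have := Int.lt_iff_add_one_le.mp h0; linarith
    have hxx : (g : ℤ) ^ 2 ≤ (c * (g : ℤ)) ^ 2 := by
      have hkey : (c * (g : ℤ)) ^ 2 - (g : ℤ) ^ 2 = (g : ℤ) ^ 2 * (c ^ 2 - 1) := by ring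
      have hnn : (0:ℤ) ≤ (g : ℤ) ^ 2 * (c ^ 2 - 1) := mul_nonneg (sq_nonneg _) (by linarith)
      linarith [hkey, hnn]
    have hyy : 0 < (d * e + d * e) ^ 2 :=
      lt_of_le_of_ne (sq_nonneg _) (Ne.symm (pow_ne_zero 2 hy0))
    have hltN : (p ^ 2 + q ^ 2).natAbs < N := by
      rw [← hN]
      exact Int.natAbs_lt_natAbs_of_nonneg_of_lt (by positivity) (by linarith)
    rcases IH _ hltN p q (m' ^ 2 - n' ^ 2) rfl hcopq heq' with h | h
    · exact hpq0 (by rw [h]; ring)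
    · exact hpq0 (by rw [h]; ring)
  · obtain ⟨k, hk⟩ := ht3; omega
  · -- t = -1 : mod 4 contradiction
    have e3 : c ^ 2 + (g : ℤ) ^ 2 = 4 * d ^ 2 := by linear_combination hT
    obtain ⟨C, A, D, f1, f2, f3⟩ : ∃ C A D : ℤ, C % 4 = 1 ∧ A % 4 = 1 ∧ C + A = 4 * D :=
      ⟨c ^ 2, (g : ℤ) ^ 2, d ^ 2, osq hcodd, osq hgodd, e3⟩
    omega
  · exact htne rfl
  · -- t = 1 : first descent
    have PT1 : PythagoreanTriple ((g : ℤ)) (2 * d) c := by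
      have h : (g : ℤ) * (g : ℤ) + (2 * d) * (2 * d) = c * c := by linear_combination (-1 : ℤ) * hT
      exact h
    have hg2d : Int.gcd ((g : ℤ)) (2 * d) = 1 :=
      Int.isCoprime_iff_gcd_eq_one.mp ((cop2 hgodd).mul_right had)
    obtain ⟨p, q, hB1, hB2, hB3, _⟩ := PythagoreanTriple.coprime_classification.mp ⟨PT1, hg2d⟩
    obtain ⟨hgp, hdp⟩ : ((g : ℤ) = p ^ 2 - q ^ 2 ∧ 2 * d = 2 * p * q) := by
      rcases hB1 with h | ⟨h1, h2⟩
      · exact h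
      · exact absurd hgodd (by rw [h1]; exact Int.not_odd_iff_even.mpr ⟨p * q, by ring⟩)
    have hd : d = p * q := by linarith
    have PT2 : PythagoreanTriple d e c := by
      have h : d * d + e * e = c * c := by linear_combination (-1 : ℤ) * hE1
      exact h
    obtain ⟨m', n', hC1, hC2, hC3, _⟩ :=
      PythagoreanTriple.coprime_classification.mp ⟨PT2, Int.isCoprime_iff_gcd_eq_one.mp hde⟩
    obtain ⟨hdm, hem⟩ : (d = m' ^ 2 - n' ^ 2 ∧ e = 2 * m' * n') := by
      rcases hC1 with h | ⟨h1, h2⟩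
      · exact h
      · exact absurd hdodd (by rw [h1]; exact Int.not_odd_iff_even.mpr ⟨m' * n', by ring⟩)
    have hS : p ^ 2 + q ^ 2 = m' ^ 2 + n' ^ 2 := by
      rcases hB2 with hc1 | hc1 <;> rcases hC2 with hc2 | hc2
      · linarith
      · exfalso; apply hc0; rw [hc1]
        linarith [sq_nonneg p, sq_nonneg q, sq_nonneg m', sq_nonneg n']
      · exfalso; apply hc0; rw [hc1]
        linarith [sq_nonneg p, sq_nonneg q, sq_nonneg m', sq_nonneg n']
      · linarith
    have hP : p * q = m' ^ 2 - n' ^ 2 := by rw [← hd]; exact hdm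
    have hcopq : IsCoprime p q := Int.isCoprime_iff_gcd_eq_one.mpr hB3
    have heq' : p ^ 4 + p ^ 2 * q ^ 2 + q ^ 4 = (2 * m' * n') ^ 2 := by
      linear_combination (p ^ 2 + q ^ 2 + m' ^ 2 + n' ^ 2) * hS - (p * q + m' ^ 2 - n' ^ 2) * hP
    have hpq0 : p * q ≠ 0 := by rw [← hd]; exact hd0
    have hpqpos : 0 < p ^ 2 + q ^ 2 := by
      obtain ⟨hp, hq⟩ := mul_ne_zero_iff.mp hpq0
      have h2 : 0 < p ^ 2 := lt_of_le_of_ne (sq_nonneg p) (Ne.symm (pow_ne_zero 2 hp))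
      linarith [sq_nonneg q]
    have hcsq : c ^ 2 = (p ^ 2 + q ^ 2) ^ 2 := by
      rcases hB2 with h | h <;> rw [h] <;> ring
    have hclt : p ^ 2 + q ^ 2 ≤ c ^ 2 := by
      rw [hcsq]
      have h1S : (1 : ℤ) ≤ p ^ 2 + q ^ 2 := by
        have := Int.lt_iff_add_one_le.mp hpqpos; linarith
      have hmul := mul_le_mul_of_nonneg_left h1S (by linarith : (0:ℤ) ≤ p ^ 2 + q ^ 2)
      have hsq : ((p:ℤ) ^ 2 + q ^ 2) * (p ^ 2 + q ^ 2) = (p ^ 2 + q ^ 2) ^ 2 := by ring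
      linarith [hmul, hsq]
    have hg1' : (1 : ℤ) ≤ (g : ℤ) ^ 2 := by
      have h0 : 0 < (g : ℤ) ^ 2 := lt_of_le_of_ne (sq_nonneg _) (Ne.symm (pow_ne_zero 2 hg0))
      have := Int.lt_iff_add_one_le.mp h0; linarith
    have hxx : c ^ 2 ≤ (c * (g : ℤ)) ^ 2 := by
      have hkey : (c * (g : ℤ)) ^ 2 - c ^ 2 = c ^ 2 * ((g : ℤ) ^ 2 - 1) := by ring
      have hnn : (0:ℤ) ≤ c ^ 2 * ((g : ℤ) ^ 2 - 1) := mul_nonneg (sq_nonneg _) (by linarith)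
      linarith [hkey, hnn]
    have hyy : 0 < (d * e + d * e) ^ 2 :=
      lt_of_le_of_ne (sq_nonneg _) (Ne.symm (pow_ne_zero 2 hy0))
    have hltN : (p ^ 2 + q ^ 2).natAbs < N := by
      rw [← hN]
      exact Int.natAbs_lt_natAbs_of_nonneg_of_lt (by positivity) (by linarith)
    rcases IH _ hltN p q (2 * m' * n') rfl hcopq heq' with h | h
    · exact hpq0 (by rw [h]; ring)
    · exact hpq0 (by rw [h]; ring)
  · obtain ⟨k, hk⟩ := ht3; omega
  · -- t = 3 : mod 4 contradiction
    have h33 : 3 * (c ^ 2 + (g : ℤ) ^ 2) = 3 * (4 * e ^ 2) := by linear_combination 4 * hE1 - hT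
    have e3 : c ^ 2 + (g : ℤ) ^ 2 = 4 * e ^ 2 := by linarith
    obtain ⟨C, A, D, f1, f2, f3⟩ : ∃ C A D : ℤ, C % 4 = 1 ∧ A % 4 = 1 ∧ C + A = 4 * D :=
      ⟨c ^ 2, (g : ℤ) ^ 2, e ^ 2, osq hcodd, osq hgodd, e3⟩
    omega
private lemma main_step (N : ℕ)
    (IH : ∀ M : ℕ, M < N → ∀ x y z : ℤ, (x ^ 2 + y ^ 2).natAbs = M → IsCoprime x y →
      x ^ 4 + x ^ 2 * y ^ 2 + y ^ 4 = z ^ 2 → x = 0 ∨ y = 0)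
    (x y z : ℤ) (hN : (x ^ 2 + y ^ 2).natAbs = N) (hco : IsCoprime x y)
    (hxo : Odd x) (hye : Even y) (hx0 : x ≠ 0) (hy0 : y ≠ 0)
    (heq : x ^ 4 + x ^ 2 * y ^ 2 + y ^ 4 = z ^ 2) : False := by
  -- A = x²+xy+y² and B = x²-xy+y² are coprime, positive, with product z²
  have hAodd : Odd (x ^ 2 + x * y + y ^ 2) := by
    have h1 : Odd (x ^ 2 + (x * y + y ^ 2)) :=
      (hxo.pow).add_even ((hye.mul_left x).add (evsq hye))
    have h2 : x ^ 2 + x * y + y ^ 2 = x ^ 2 + (x * y + y ^ 2) := by ring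
    rw [h2]; exact h1
  have hx2p : 0 < x ^ 2 := lt_of_le_of_ne (sq_nonneg x) (Ne.symm (pow_ne_zero 2 hx0))
  have hApos : 0 < x ^ 2 + x * y + y ^ 2 := by
    have hs := sq_nonneg (x + y)
    have hs2 := sq_nonneg y
    have hkey : 2 * (x ^ 2 + x * y + y ^ 2) = x ^ 2 + y ^ 2 + (x + y) ^ 2 := by ring
    linarith
  have hBpos : 0 < x ^ 2 - x * y + y ^ 2 := by
    have hs := sq_nonneg (x - y)
    have hs2 := sq_nonneg y
    have hkey : 2 * (x ^ 2 - x * y + y ^ 2) = x ^ 2 + y ^ 2 + (x - y) ^ 2 := by ring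
    linarith
  have hcoAB : IsCoprime (x ^ 2 + x * y + y ^ 2) (x ^ 2 - x * y + y ^ 2) := by
    apply copint
    intro k hk1 hk2
    have hkodd : Odd k := by
      rw [← Int.not_even_iff_odd]
      intro hke
      obtain ⟨j, hj⟩ := hke
      have h2A : (2 : ℤ) ∣ x ^ 2 + x * y + y ^ 2 := dvd_trans ⟨j, by linarith⟩ hk1
      obtain ⟨w2, hw2⟩ := h2A
      have hevA : Even (x ^ 2 + x * y + y ^ 2) := ⟨w2, by linarith⟩
      exact (Int.not_odd_iff_even.mpr hevA) hAodd
    have hd1 : k ∣ 2 * (x ^ 2 + y ^ 2) := by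
      have h : 2 * (x ^ 2 + y ^ 2) = (x ^ 2 + x * y + y ^ 2) + (x ^ 2 - x * y + y ^ 2) := by ring
      rw [h]; exact dvd_add hk1 hk2
    have hd2 : k ∣ 2 * (x * y) := by
      have h : 2 * (x * y) = (x ^ 2 + x * y + y ^ 2) - (x ^ 2 - x * y + y ^ 2) := by ring
      rw [h]; exact dvd_sub hk1 hk2
    have hc2 : IsCoprime k 2 := cop2 hkodd
    exact (copsum hco).isUnit_of_dvd' (hc2.dvd_of_dvd_mul_left hd1) (hc2.dvd_of_dvd_mul_left hd2)
  obtain ⟨u, hu⟩ := Int.sq_of_isCoprime hcoAB (show _ * _ = z ^ 2 by linear_combination heq)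
  have hA : x ^ 2 + x * y + y ^ 2 = u ^ 2 := by
    rcases hu with h | h
    · exact h
    · exfalso; have := sq_nonneg u; linarith
  obtain ⟨v, hv⟩ := Int.sq_of_isCoprime hcoAB.symm
    (show (x ^ 2 - x * y + y ^ 2) * (x ^ 2 + x * y + y ^ 2) = z ^ 2 by linear_combination heq)
  have hB : x ^ 2 - x * y + y ^ 2 = v ^ 2 := by
    rcases hv with h | h
    · exact h
    · exfalso; have := sq_nonneg v; linarith
  have huo : Odd u := by
    rcases Int.even_or_odd u with h | h
    · exfalso
      have : Even (u ^ 2) := evsq h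
      rw [← hA] at this
      exact (Int.not_odd_iff_even.mpr this) hAodd
    · exact h
  have hvo : Odd v := by
    rcases Int.even_or_odd v with h | h
    · exfalso
      have hBodd : Odd (x ^ 2 - x * y + y ^ 2) := by
        have h1 : Odd (x ^ 2 + (y ^ 2 - x * y)) :=
          (hxo.pow).add_even ((evsq hye).sub (hye.mul_left x))
        have h2 : x ^ 2 - x * y + y ^ 2 = x ^ 2 + (y ^ 2 - x * y) := by ring
        rw [h2]; exact h1
      have : Even (v ^ 2) := evsq h
      rw [← hB] at this
      exact (Int.not_odd_iff_even.mpr this) hBodd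
    · exact h
  obtain ⟨l, hl⟩ := huo.add_odd hvo
  obtain ⟨m, hm⟩ := huo.sub_odd hvo
  have hu_eq : u = l + m := by linarith
  have hv_eq : v = l - m := by linarith
  subst hu_eq hv_eq
  have hsum : l ^ 2 + m ^ 2 = x ^ 2 + y ^ 2 := by
    have h2 : 2 * (l ^ 2 + m ^ 2) = 2 * (x ^ 2 + y ^ 2) := by linear_combination -hA - hB
    linarith
  have hprod : x * y = 2 * (l * m) := by
    have h2 : 2 * (x * y) = 2 * (2 * (l * m)) := by linear_combination hA - hB
    linarith
  have hlm : IsCoprime l m := by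
    apply copint
    intro k hk1 hk2
    have hd1 : k ∣ x ^ 2 + y ^ 2 := by
      rw [← hsum]
      have h1 : k ∣ l ^ 2 := by rw [sq l]; exact hk1.mul_left l
      have h2 : k ∣ m ^ 2 := by rw [sq m]; exact hk2.mul_left m
      exact dvd_add h1 h2
    have hd2 : k ∣ x * y := by
      rw [hprod]
      exact Dvd.dvd.mul_left (hk2.mul_left l) 2
    exact (copsum hco).isUnit_of_dvd' hd1 hd2
  have hx2o : Odd (x ^ 2 + y ^ 2) := (hxo.pow).add_even (evsq hye)
  rcases Int.even_or_odd l with hle | hlo'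
  · rcases Int.even_or_odd m with hme | hmo
    · have hev : Even (l ^ 2 + m ^ 2) := (evsq hle).add (evsq hme)
      rw [hsum] at hev
      exact (Int.not_odd_iff_even.mpr hev) hx2o
    · exact core N IH x y m l hN hco hlm.symm hxo hye hx0 hy0 hmo hle
        (by linarith) (by linear_combination hprod)
  · rcases Int.even_or_odd m with hme | hmo
    · exact core N IH x y l m hN hco hlm hxo hye hx0 hy0 hlo' hme hsum hprod
    · have hev : Even (l ^ 2 + m ^ 2) := (hlo'.pow (n := 2)).add_odd (hmo.pow (n := 2))
      rw [hsum] at hev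
      exact (Int.not_odd_iff_even.mpr hev) hx2o
private lemma key : ∀ N : ℕ, ∀ x y z : ℤ, (x ^ 2 + y ^ 2).natAbs = N → IsCoprime x y →
    x ^ 4 + x ^ 2 * y ^ 2 + y ^ 4 = z ^ 2 → x = 0 ∨ y = 0 := by
  intro N
  induction N using Nat.strong_induction_on with
  | _ N IH =>
    intro x y z hN hco heq
    by_cases hx0 : x = 0
    · exact Or.inl hx0
    by_cases hy0 : y = 0
    · exact Or.inr hy0
    exfalso
    rcases Int.even_or_odd x with hxe | hxo
    · rcases Int.even_or_odd y with hye | hyo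
      · -- both even: contradicts coprimality
        obtain ⟨a, ha⟩ := hxe
        obtain ⟨b, hb⟩ := hye
        have h2 : IsUnit (2 : ℤ) := hco.isUnit_of_dvd' ⟨a, by linarith⟩ ⟨b, by linarith⟩
        rcases Int.isUnit_iff.mp h2 with h | h <;> norm_num at h
      · -- x even, y odd : swap
        exact main_step N IH y x z (by rw [← hN]; ring_nf) hco.symm hyo hxe hy0 hx0
          (by linear_combination heq)
    · rcases Int.even_or_odd y with hye | hyo
      · exact main_step N IH x y z hN hco hxo hye hx0 hy0 heq
      · -- both odd : mod 4 contradiction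
        have e1 : (x ^ 2) ^ 2 % 4 = 1 := osq (hxo.pow)
        have e2 : (x * y) ^ 2 % 4 = 1 := osq (hxo.mul hyo)
        have e3 : (y ^ 2) ^ 2 % 4 = 1 := osq (hyo.pow)
        have e5 : (x ^ 2) ^ 2 + (x * y) ^ 2 + (y ^ 2) ^ 2 = z ^ 2 := by linear_combination heq
        have e4 : z ^ 2 % 4 = 0 ∨ z ^ 2 % 4 = 1 := by
          rcases Int.even_or_odd z with ⟨k, hk⟩ | hzo
          · left
            have hz : z ^ 2 = 4 * (k * k) := by rw [hk]; ring
            have hmod : ∀ j : ℤ, (4 * j) % 4 = 0 := fun j => by omega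
            rw [hz]; exact hmod _
          · right; exact osq hzo
        obtain ⟨A, B, C, D, f1, f2, f3, f4, f5⟩ :
            ∃ A B C D : ℤ, A % 4 = 1 ∧ B % 4 = 1 ∧ C % 4 = 1 ∧ A + B + C = D ∧
              (D % 4 = 0 ∨ D % 4 = 1) :=
          ⟨(x ^ 2) ^ 2, (x * y) ^ 2, (y ^ 2) ^ 2, z ^ 2, e1, e2, e3, e5, e4⟩
        omega

theorem diophantine_x4_x2y2_y4 (X Y Z : ℤ) (h : X^4 + X^2*Y^2 + Y^4 = Z^2) :
    X = 0 ∨ Y = 0 := by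
  by_cases hX : X = 0
  · exact Or.inl hX
  have hgpos : 0 < Int.gcd X Y :=
    Nat.pos_of_ne_zero fun hg => hX (Int.natAbs_eq_zero.mp (Nat.eq_zero_of_gcd_eq_zero_left hg))
  obtain ⟨x1, y1, hco1, hX1, hY1⟩ := Int.exists_gcd_one hgpos
  set g : ℤ := (Int.gcd X Y : ℤ) with hgdef
  have hg0 : g ≠ 0 := by
    have : (0 : ℤ) < g := by rw [hgdef]; exact_mod_cast hgpos
    linarith
  rw [hX1, hY1] at h
  have hdvd : (g ^ 2) ^ 2 ∣ Z ^ 2 :=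
    ⟨x1 ^ 4 + x1 ^ 2 * y1 ^ 2 + y1 ^ 4, by linear_combination -h⟩
  obtain ⟨z1, hz1⟩ := (Int.pow_dvd_pow_iff (two_ne_zero)).mp hdvd
  have heq1 : x1 ^ 4 + x1 ^ 2 * y1 ^ 2 + y1 ^ 4 = z1 ^ 2 := by
    have h4 : g ^ 4 ≠ 0 := pow_ne_zero 4 hg0
    apply mul_left_cancel₀ h4
    rw [hz1] at h
    linear_combination h
  rcases key ((x1 ^ 2 + y1 ^ 2).natAbs) x1 y1 z1 rfl (Int.isCoprime_iff_gcd_eq_one.mpr hco1) heq1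
    with h1 | h1
  · left; rw [hX1, h1]; ring
  · right; rw [hY1, h1]; ring
end

section
/- If $n_1, x, y$ are integers satisfying $\frac{n_1}{n_1^2} = \frac{x}{x^2+y^2} + \frac{n_1-x}{(n_1-x)^2+y^2}$ (with all denominators nonzero), then $n_1 \cdot x \cdot (n_1 - x) = 0$. -/
set_option maxHeartbeats 1000000

lemma sq_of_coprime_pos {a b c : ℤ} (ha : 0 < a) (h : IsCoprime a b)
    (heq : a * b = c ^ 2) : ∃ d : ℤ, 0 < d ∧ a = d ^ 2 := by
  obtain ⟨a0, h0 | h0⟩ := Int.sq_of_isCoprime h heq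
  · refine ⟨|a0|, ?_, by rw [sq_abs]; exact h0⟩
    rcases eq_or_lt_of_le (abs_nonneg a0) with h1 | h1
    · exfalso; rw [h0, ← sq_abs, ← h1] at ha; simp at ha
    · exact h1
  · exfalso; nlinarith [sq_nonneg a0]

lemma coprime_of_odd_two {n : ℤ} (h : Odd n) : IsCoprime n 2 := by
  obtain ⟨m, hm⟩ := h
  exact ⟨1, -m, by rw [hm]; ring⟩

lemma zmod8_k3 : ∀ m n t : ZMod 8, (2*m+1)^2 ≠ 3*(2*n+1)^2 + 4*t^2 := by decide
lemma zmod8_km1 : ∀ m n t : ZMod 8, 4*t^2 ≠ (2*m+1)^2 + (2*n+1)^2 := by decide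

lemma lt_of_sq_eq_add {a b t : ℤ} (ha : 0 < a) (hb : 0 < b) (ht : 0 < t)
    (h : a^2 = b^2 + 4*t^2) : b < a := by nlinarith

lemma descent_core (z : ℕ)
    (IH : ∀ m : ℕ, m < z → ∀ p q : ℤ, 0 < p → 0 < q →
      p^4 + p^2*q^2 + q^4 ≠ (m:ℤ)^2)
    (x y : ℤ) (hx : 0 < x) (hy : 0 < y) (cop : IsCoprime x y)
    (hox : Odd x) (hey : Even y)
    (h : x^4 + x^2*y^2 + y^4 = (z:ℤ)^2) : False := by
  -- factor into two coprime squares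
  have hu_pos : 0 < x^2 + x*y + y^2 := by nlinarith
  have hv_pos : 0 < x^2 - x*y + y^2 := by nlinarith [sq_nonneg (x - y)]
  have huv : (x^2 + x*y + y^2) * (x^2 - x*y + y^2) = (z:ℤ)^2 := by
    linear_combination h
  have cop_ux : IsCoprime (x^2 + x*y + y^2) x := by
    have h1 : IsCoprime (y^2) x := cop.symm.pow_left
    have h2 := h1.add_mul_left_left (x + y)
    have he : y^2 + x*(x+y) = x^2 + x*y + y^2 := by ring
    rwa [he] at h2
  have cop_uy : IsCoprime (x^2 + x*y + y^2) y := by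
    have h1 : IsCoprime (x^2) y := cop.pow_left
    have h2 := h1.add_mul_left_left (x + y)
    have he : x^2 + y*(x+y) = x^2 + x*y + y^2 := by ring
    rwa [he] at h2
  have odd_u : Odd (x^2 + x*y + y^2) := by
    have h1 : Odd (x^2) := hox.pow
    have h2 : Even (x*y + y^2) := (hey.mul_left x).add (by rw [pow_two]; exact hey.mul_left y)
    have h3 := h1.add_even h2
    have he : x^2 + (x*y + y^2) = x^2 + x*y + y^2 := by ring
    rwa [he] at h3
  have cop_uv : IsCoprime (x^2 + x*y + y^2) (x^2 - x*y + y^2) := by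
    have hc : IsCoprime (x^2 + x*y + y^2) (2*(x*y)) :=
      (coprime_of_odd_two odd_u).mul_right (cop_ux.mul_right cop_uy)
    obtain ⟨p, q, hpq⟩ := hc
    exact ⟨p + q, -q, by linear_combination hpq⟩
  obtain ⟨e, he_pos, he⟩ := sq_of_coprime_pos hu_pos cop_uv huv
  obtain ⟨f, hf_pos, hf⟩ := sq_of_coprime_pos hv_pos cop_uv.symm
    (by rw [mul_comm]; exact huv)
  have hz : e * f = (z:ℤ) := by
    have h1 : (e*f)^2 = (z:ℤ)^2 := by rw [mul_pow, ← he, ← hf]; exact huv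
    have h2 : (e*f - (z:ℤ))*(e*f + (z:ℤ)) = 0 := by linear_combination h1
    rcases mul_eq_zero.mp h2 with h3 | h3
    · linarith
    · have : (0:ℤ) ≤ (z:ℤ) := Int.natCast_nonneg z
      nlinarith
  have odd_e : Odd e := by
    rcases Int.even_or_odd e with hee | hoe
    · exfalso
      have : Even (e^2) := by rw [pow_two]; exact hee.mul_left e
      rw [← he] at this
      exact (Int.not_odd_iff_even.mpr this) odd_u
    · exact hoe
  have odd_f : Odd f := by
    rcases Int.even_or_odd f with hee | hoe
    · exfalso
      have h1 : Odd (x^2 - x*y + y^2) := by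
        have h2 : Odd (x^2 + x*y + y^2 - 2*(x*y)) := by
          obtain ⟨m, hm⟩ := odd_u
          exact ⟨m - x*y, by rw [hm]; ring⟩
        have he2 : x^2 + x*y + y^2 - 2*(x*y) = x^2 - x*y + y^2 := by ring
        rwa [he2] at h2
      have : Even (f^2) := by rw [pow_two]; exact hee.mul_left f
      rw [← hf] at this
      exact (Int.not_odd_iff_even.mpr this) h1
    · exact hoe
  have he2 : 2 ≤ e := by
    have hu3 : 3 ≤ x^2 + x*y + y^2 := by nlinarith
    by_contra hcon
    have : e = 1 := by omega
    rw [this] at he; simp at he; omega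
  have hf2 : 2 ≤ f := by
    have hxy : x ≠ y := by
      rintro rfl; exact (Int.not_odd_iff_even.mpr hey) hox
    have h1 : 1 ≤ |x - y| := Int.one_le_abs (sub_ne_zero.mpr hxy)
    have h2 : 1 ≤ (x-y)^2 := by
      have h3 : 1*1 ≤ |x-y| * |x-y| := mul_le_mul h1 h1 one_pos.le (abs_nonneg _)
      nlinarith [sq_abs (x-y)]
    have hv3 : 2 ≤ x^2 - x*y + y^2 := by nlinarith
    by_contra hcon
    have : f = 1 := by omega
    rw [this] at hf; simp at hf; omega
  have cop_ef : IsCoprime e f := by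
    have h1 : IsCoprime (e^2) (f^2) := by rw [← he, ← hf]; exact cop_uv
    exact (IsCoprime.pow_left_iff two_pos).mp ((IsCoprime.pow_right_iff two_pos).mp h1)
  -- U, V
  obtain ⟨U, hU⟩ : Even (e + f) := odd_e.add_odd odd_f
  obtain ⟨V, hV⟩ : Even (e - f) := odd_e.sub_odd odd_f
  have hUVe : U + V = e := by linarith
  have hUVf : U - V = f := by linarith
  have hU_pos : 0 < U := by linarith
  have heltf : f < e := by nlinarith
  have hV_pos : 0 < V := by linarith
  have he' : x^2 + x*y + y^2 = (U+V)^2 := by rw [hUVe]; exact he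
  have hf' : x^2 - x*y + y^2 = (U-V)^2 := by rw [hUVf]; exact hf
  have hUV1 : U^2 + V^2 = x^2 + y^2 := by
    have hd : 2*(U^2 + V^2) = 2*(x^2 + y^2) := by linear_combination -he' - hf'
    linarith
  have h2xy : 2*(x*y) = 4*(U*V) := by linear_combination he' - hf'
  obtain ⟨c, hcy⟩ := hey
  have hc_pos : 0 < c := by linarith
  have hUVxc : U * V = x * c := by
    have h4 : 4*(U*V) = 4*(x*c) := by linear_combination -h2xy + 2*x*hcy
    linarith
  have cop_UV : IsCoprime U V := by
    obtain ⟨p, q, hpq⟩ := cop_ef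
    exact ⟨p + q, p - q, by linear_combination hpq + p*hUVe + q*hUVf⟩
  have cop_xc : IsCoprime x c := cop.of_isCoprime_of_dvd_right ⟨2, by linarith⟩
  -- split U = a*s, x = a*b, c = s*t, V = b*t with pairwise coprimality
  have hgUx : 0 < Int.gcd U x := Int.gcd_pos_iff.mpr (Or.inl (ne_of_gt hU_pos))
  set a : ℤ := ((Int.gcd U x : ℕ) : ℤ) with ha_def
  have ha_pos : 0 < a := by exact Int.natCast_pos.mpr hgUx
  have haU : a ∣ U := Int.gcd_dvd_left _ _
  have hax : a ∣ x := Int.gcd_dvd_right _ _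
  set s : ℤ := U / a with hs_def
  set b : ℤ := x / a with hb_def
  have hs : U = a * s := (Int.mul_ediv_cancel' haU).symm
  have hb : x = a * b := (Int.mul_ediv_cancel' hax).symm
  have cop_sb : IsCoprime s b :=
    Int.isCoprime_iff_gcd_eq_one.mpr (Int.gcd_div_gcd_div_gcd hgUx)
  have hs_pos : 0 < s := by
    rcases mul_pos_iff.mp (hs ▸ hU_pos) with ⟨_, h2⟩ | ⟨h1, _⟩
    · exact h2
    · linarith
  have hb_pos : 0 < b := by
    rcases mul_pos_iff.mp (hb ▸ hx) with ⟨_, h2⟩ | ⟨h1, _⟩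
    · exact h2
    · linarith
  have hsV : s * V = b * c := by
    have h0 : a * (s*V) = a * (b*c) := by
      rw [← mul_assoc, ← hs, ← mul_assoc, ← hb]; exact hUVxc
    exact mul_left_cancel₀ (ne_of_gt ha_pos) h0
  have hsc : s ∣ c := cop_sb.dvd_of_dvd_mul_left ⟨V, hsV.symm⟩
  set t : ℤ := c / s with ht_def
  have ht : c = s * t := (Int.mul_ediv_cancel' hsc).symm
  have hVbt : V = b * t := by
    have h0 : s * V = s * (b*t) := by rw [hsV, ht]; ring
    exact mul_left_cancel₀ (ne_of_gt hs_pos) h0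
  have ht_pos : 0 < t := by
    rcases mul_pos_iff.mp (ht ▸ hc_pos) with ⟨_, h2⟩ | ⟨h1, _⟩
    · exact h2
    · linarith
  have cop_ab : IsCoprime a b :=
    (cop_UV.of_isCoprime_of_dvd_left haU).of_isCoprime_of_dvd_right ⟨t, hVbt⟩
  have cop_at : IsCoprime a t :=
    (cop_xc.of_isCoprime_of_dvd_left hax).of_isCoprime_of_dvd_right ⟨s, by rw [ht]; ring⟩
  obtain ⟨oa, ob⟩ := Int.odd_mul.mp (hb ▸ hox)
  -- the key equation
  have star : (a*s)^2 + (b*t)^2 = (a*b)^2 + (2*(s*t))^2 := by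
    have hy2 : y = 2*(s*t) := by
      have : y = c + c := hcy
      have h2 : c = s*t := ht
      linarith
    rw [← hs, ← hVbt, ← hb, ← hy2]; exact hUV1
  have hfac : b^2*(a^2 - t^2) = s^2*(a^2 - 4*t^2) := by linear_combination -star
  have hdvd : s^2 ∣ a^2 - t^2 :=
    (cop_sb.pow).dvd_of_dvd_mul_left ⟨a^2 - 4*t^2, hfac⟩
  obtain ⟨k, hk⟩ := hdvd
  have hk2 : a^2 - 4*t^2 = k * b^2 := by
    have h0 : s^2 * (a^2 - 4*t^2) = s^2 * (k * b^2) := by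
      rw [← hfac, hk]; ring
    exact mul_left_cancel₀ (pow_ne_zero 2 (ne_of_gt hs_pos)) h0
  have e1 : 3*(t^2) = k*(s^2 - b^2) := by linear_combination hk - hk2
  have e2 : 3*(a^2) = k*(4*s^2 - b^2) := by linear_combination 4*hk - hk2
  have hk3 : k ∣ 3 := by
    obtain ⟨p, q, hpq⟩ := (cop_at.pow (m := 2) (n := 2))
    exact ⟨p*(4*s^2 - b^2) + q*(s^2 - b^2), by linear_combination p*e2 + q*e1 - 3*hpq⟩
  have kcases : k = 1 ∨ k = -1 ∨ k = 3 ∨ k = -3 := by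
    have h1 : k.natAbs ∣ 3 := by
      have := Int.natAbs_dvd_natAbs.mpr hk3
      simpa using this
    have h2 : k.natAbs = 1 ∨ k.natAbs = 3 := (Nat.Prime.eq_one_or_self_of_dvd (by norm_num) _ h1)
    omega
  -- size bounds
  have hUz : U < (z:ℤ) := by
    have h3 : (1:ℤ)*1 ≤ (e-1)*(f-1) :=
      mul_le_mul (by linarith) (by linarith) (by linarith) (by linarith)
    have h4 : e*f - e - f + 1 = (e-1)*(f-1) := by ring
    linarith
  have hVz : V < (z:ℤ) := by linarith
  obtain ⟨ma, hma⟩ : ∃ m, a = 2*m + 1 := ⟨(a-1)/2, by obtain ⟨m, hm⟩ := oa; omega⟩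
  obtain ⟨mb, hmb⟩ : ∃ m, b = 2*m + 1 := ⟨(b-1)/2, by obtain ⟨m, hm⟩ := ob; omega⟩
  rcases kcases with hk1 | hk1 | hk1 | hk1
  · -- k = 1 : descent
    subst hk1
    have hA : a^2 = s^2 + t^2 := by linear_combination hk
    have hB : a^2 = b^2 + 4*t^2 := by linear_combination hk2
    obtain ⟨d1, hd1⟩ : Even (a - b) := oa.sub_odd ob
    obtain ⟨d2, hd2⟩ : Even (a + b) := oa.add_odd ob
    have hae : d1 + d2 = a := by linarith
    have hbe : d2 - d1 = b := by linarith
    have hd12 : d1 * d2 = t^2 := by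
      have h4 : 4*(d1*d2) = 4*t^2 := by
        linear_combination hB - (a+b)*hd1 - (d1+d1)*hd2
      linarith
    have hab : b < a := lt_of_sq_eq_add (by linarith) hb_pos ht_pos hB
    have d1_pos : 0 < d1 := by linarith
    have d2_pos : 0 < d2 := by linarith
    have cop_d : IsCoprime d1 d2 := by
      obtain ⟨p, q, hpq⟩ := cop_ab
      exact ⟨p - q, p + q, by linear_combination hpq + p*hae + q*hbe⟩
    obtain ⟨n1, hn1_pos, hn1⟩ := sq_of_coprime_pos d1_pos cop_d hd12
    obtain ⟨m1, hm1_pos, hm1⟩ := sq_of_coprime_pos d2_pos cop_d.symm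
      (by rw [mul_comm]; exact hd12)
    have hs2 : s^2 = d1^2 + d1*d2 + d2^2 := by
      linear_combination (-1)*hA - (d1+d2+a)*hae + hd12
    have hnew : n1^4 + n1^2*m1^2 + m1^4 = s^2 := by
      rw [hn1, hm1] at hs2; linear_combination -hs2
    have hsU : s ≤ U := by
      have := le_mul_of_one_le_left hs_pos.le (by linarith : (1:ℤ) ≤ a)
      linarith [hs ▸ this]
    have hzlt : s.natAbs < z := by omega
    exact IH s.natAbs hzlt n1 m1 hn1_pos hm1_pos
      (by rwa [Int.natAbs_of_nonneg hs_pos.le])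
  · -- k = -1 : impossible mod 8
    subst hk1
    have hA : 4*t^2 = a^2 + b^2 := by linear_combination -hk2
    rw [hma, hmb] at hA
    have h8 := congrArg (fun r : ℤ => (r : ZMod 8)) hA
    push_cast at h8
    exact zmod8_km1 _ _ _ h8
  · -- k = 3 : impossible mod 8
    subst hk1
    have hA : a^2 = 3*b^2 + 4*t^2 := by linear_combination hk2
    rw [hma, hmb] at hA
    have h8 := congrArg (fun r : ℤ => (r : ZMod 8)) hA
    push_cast at h8
    exact zmod8_k3 _ _ _ h8
  · -- k = -3 : descent
    subst hk1
    have hA : t^2 = a^2 + 3*s^2 := by linear_combination -hk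
    have hB : b^2 = a^2 + 4*s^2 := by
      have h4 : 3*(b^2) = 3*(a^2 + 4*s^2) := by linear_combination 4*hA + hk2
      linarith
    obtain ⟨d1, hd1⟩ : Even (b - a) := ob.sub_odd oa
    obtain ⟨d2, hd2⟩ : Even (b + a) := ob.add_odd oa
    have hae : d2 - d1 = a := by linarith
    have hbe : d1 + d2 = b := by linarith
    have hd12 : d1 * d2 = s^2 := by
      have h4 : 4*(d1*d2) = 4*s^2 := by
        linear_combination hB - (b+a)*hd1 - (d1+d1)*hd2
      linarith
    have hab : a < b := lt_of_sq_eq_add (by linarith) (by linarith) hs_pos hB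
    have d1_pos : 0 < d1 := by linarith
    have d2_pos : 0 < d2 := by linarith
    have cop_d : IsCoprime d1 d2 := by
      obtain ⟨p, q, hpq⟩ := cop_ab
      exact ⟨q - p, q + p, by linear_combination hpq + p*hae + q*hbe⟩
    obtain ⟨n1, hn1_pos, hn1⟩ := sq_of_coprime_pos d1_pos cop_d hd12
    obtain ⟨m1, hm1_pos, hm1⟩ := sq_of_coprime_pos d2_pos cop_d.symm
      (by rw [mul_comm]; exact hd12)
    have ht2 : t^2 = d1^2 + d1*d2 + d2^2 := by
      linear_combination hA - (a+d2-d1)*hae - 3*hd12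
    have hnew : n1^4 + n1^2*m1^2 + m1^4 = t^2 := by
      rw [hn1, hm1] at ht2; linear_combination -ht2
    have htV : t ≤ V := by
      have := le_mul_of_one_le_left ht_pos.le (by linarith : (1:ℤ) ≤ b)
      linarith [hVbt ▸ this]
    have hzlt : t.natAbs < z := by omega
    exact IH t.natAbs hzlt n1 m1 hn1_pos hm1_pos
      (by rwa [Int.natAbs_of_nonneg ht_pos.le])


lemma zmod4_oddsq : ∀ m n c : ZMod 4,
    (2*m+1)^4 + (2*m+1)^2*(2*n+1)^2 + (2*n+1)^4 ≠ c^2 := by decide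

lemma quartic_pos : ∀ z : ℕ, ∀ x y : ℤ, 0 < x → 0 < y →
    x^4 + x^2*y^2 + y^4 ≠ (z:ℤ)^2 := by
  intro z
  induction z using Nat.strong_induction_on with
  | _ z IH =>
  intro x y hx hy h
  by_cases hg : Int.gcd x y = 1
  · have cop : IsCoprime x y := Int.isCoprime_iff_gcd_eq_one.mpr hg
    rcases Int.even_or_odd x with hex | hox
    · rcases Int.even_or_odd y with hey | hoy
      · obtain ⟨u, hu⟩ := hex; obtain ⟨v, hv⟩ := hey
        have h2 : IsUnit (2:ℤ) := cop.isUnit_of_dvd' ⟨u, by omega⟩ ⟨v, by omega⟩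
        rw [Int.isUnit_iff] at h2; omega
      · exact descent_core z IH y x hy hx cop.symm hoy hex (by linear_combination h)
    · rcases Int.even_or_odd y with hey | hoy
      · exact descent_core z IH x y hx hy cop hox hey h
      · obtain ⟨mx, hmx⟩ : ∃ m, x = 2*m+1 := ⟨(x-1)/2, by obtain ⟨m, hm⟩ := hox; omega⟩
        obtain ⟨my, hmy⟩ : ∃ m, y = 2*m+1 := ⟨(y-1)/2, by obtain ⟨m, hm⟩ := hoy; omega⟩
        rw [hmx, hmy] at h
        have h4 := congrArg (fun r : ℤ => (r : ZMod 4)) h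
        push_cast at h4
        exact zmod4_oddsq _ _ _ h4
  · have hgpos : 0 < Int.gcd x y := Int.gcd_pos_iff.mpr (Or.inl (ne_of_gt hx))
    set g : ℤ := ((Int.gcd x y : ℕ) : ℤ) with hgdef
    have hgz : 0 < g := Int.natCast_pos.mpr hgpos
    have hg2 : 2 ≤ g := by
      simp only [hgdef]; omega
    obtain ⟨x1, hx1⟩ : g ∣ x := Int.gcd_dvd_left _ _
    obtain ⟨y1, hy1⟩ : g ∣ y := Int.gcd_dvd_right _ _
    have hx1p : 0 < x1 := by
      rcases mul_pos_iff.mp (hx1 ▸ hx) with ⟨_, h2⟩ | ⟨h1, _⟩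
      · exact h2
      · linarith
    have hy1p : 0 < y1 := by
      rcases mul_pos_iff.mp (hy1 ▸ hy) with ⟨_, h2⟩ | ⟨h1, _⟩
      · exact h2
      · linarith
    have hh : g^4 * (x1^4 + x1^2*y1^2 + y1^4) = ((z:ℤ))^2 := by
      rw [hx1, hy1] at h; linear_combination h
    have hdvd4 : (g^2)^2 ∣ ((z:ℤ))^2 := ⟨x1^4 + x1^2*y1^2 + y1^4, by rw [← hh]; ring⟩
    have hdvd : g^2 ∣ (z:ℤ) := (Int.pow_dvd_pow_iff two_ne_zero).mp hdvd4
    have hdvdn : (Int.gcd x y)^2 ∣ z := by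
      have h0 : (((Int.gcd x y)^2 : ℕ) : ℤ) ∣ (z:ℤ) := by push_cast; exact hdvd
      exact_mod_cast h0
    obtain ⟨z1, hz1⟩ := hdvdn
    have hz0 : z ≠ 0 := by
      rintro rfl
      have hpos : 0 < x^4 + x^2*y^2 + y^4 := by positivity
      simp at h; omega
    have hsq : (Int.gcd x y)^2 = (Int.gcd x y)*(Int.gcd x y) := sq (Int.gcd x y) ▸ rfl
    have hzlt : z1 < z := by
      rw [hsq] at hz1
      have hb : 2 ≤ Int.gcd x y := by omega
      have hz1ne : z1 ≠ 0 := by rintro rfl; simp at hz1; omega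
      calc z1 < 2*2*z1 := by omega
        _ ≤ Int.gcd x y * Int.gcd x y * z1 := Nat.mul_le_mul_right z1 (Nat.mul_le_mul hb hb)
        _ = z := hz1.symm
    have hnew : x1^4 + x1^2*y1^2 + y1^4 = ((z1:ℤ))^2 := by
      have h0 : g^4 * (x1^4+x1^2*y1^2+y1^4) = g^4 * ((z1:ℤ)^2) := by
        rw [hh, hz1]; push_cast; ring
      exact mul_left_cancel₀ (by positivity) h0
    exact IH z1 hzlt x1 y1 hx1p hy1p hnew

lemma quartic_int (x y w : ℤ) (hx : x ≠ 0) (hy : y ≠ 0) :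
    x^4 + x^2*y^2 + y^4 ≠ w^2 := by
  intro h
  apply quartic_pos w.natAbs |x| |y| (abs_pos.mpr hx) (abs_pos.mpr hy)
  have h1 : ((w.natAbs : ℕ) : ℤ) = |w| := (Int.abs_eq_natAbs w).symm
  rw [h1]
  have h2 : |x|^2 = x^2 := sq_abs x
  have h3 : |y|^2 = y^2 := sq_abs y
  have h4 : |w|^2 = w^2 := sq_abs w
  have h5 : |x|^4 = x^4 := by rw [show (4:ℕ) = 2*2 from rfl, pow_mul, pow_mul, h2]
  have h6 : |y|^4 = y^4 := by rw [show (4:ℕ) = 2*2 from rfl, pow_mul, pow_mul, h3]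
  rw [h2, h3, h4, h5, h6]; exact h

lemma main2 (u v y : ℤ) (hu : 0 < u) (hv : 0 < v)
    (h : (y^2 - u*v)^2 = (u*v)*(u+v)^2) : False := by
  have hN : 0 < u + v := by linarith
  have hdvd : (u+v) ∣ (y^2 - u*v) := by
    have h2 : (u+v)^2 ∣ (y^2-u*v)^2 := ⟨u*v, by linear_combination h⟩
    exact (Int.pow_dvd_pow_iff two_ne_zero).mp h2
  obtain ⟨w, hw⟩ := hdvd
  have hw2 : w^2 = u*v := by
    have h0 : (u+v)^2 * (w^2) = (u+v)^2 * (u*v) := by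
      rw [hw] at h; linear_combination h
    exact mul_left_cancel₀ (pow_ne_zero 2 (ne_of_gt hN)) h0
  have hy2 : y^2 = w^2 + (u+v)*w := by linear_combination hw - hw2
  have hAM : 4*(w^2) ≤ (u+v)^2 := by nlinarith [sq_nonneg (u-v)]
  have hwpos : 0 < w := by
    rcases lt_trichotomy w 0 with hlt | heq | hgt
    · exfalso
      have h2w : -2*w ≤ u+v := by nlinarith
      have h3 : (u+v)*w ≤ (-2*w)*w := mul_le_mul_of_nonpos_right h2w (le_of_lt hlt)
      nlinarith [sq_nonneg y]
    · rw [heq] at hw2; nlinarith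
    · exact hgt
  -- strip gcd
  have hgpos : 0 < Int.gcd u v := Int.gcd_pos_iff.mpr (Or.inl (ne_of_gt hu))
  set g : ℤ := ((Int.gcd u v : ℕ) : ℤ) with hgdef
  have hgz : 0 < g := Int.natCast_pos.mpr hgpos
  have hgu : g ∣ u := Int.gcd_dvd_left _ _
  have hgv : g ∣ v := Int.gcd_dvd_right _ _
  set u1 : ℤ := u / g with hu1_def
  set v1 : ℤ := v / g with hv1_def
  have hu1 : u = g * u1 := (Int.mul_ediv_cancel' hgu).symm
  have hv1 : v = g * v1 := (Int.mul_ediv_cancel' hgv).symm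
  have cop1 : IsCoprime u1 v1 :=
    Int.isCoprime_iff_gcd_eq_one.mpr (Int.gcd_div_gcd_div_gcd hgpos)
  have hu1p : 0 < u1 := by
    rcases mul_pos_iff.mp (hu1 ▸ hu) with ⟨_, h2⟩ | ⟨h1, _⟩
    · exact h2
    · linarith
  have hv1p : 0 < v1 := by
    rcases mul_pos_iff.mp (hv1 ▸ hv) with ⟨_, h2⟩ | ⟨h1, _⟩
    · exact h2
    · linarith
  have hgw : g ∣ w := by
    have h2 : g^2 ∣ w^2 := ⟨u1*v1, by rw [hw2, hu1, hv1]; ring⟩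
    exact (Int.pow_dvd_pow_iff two_ne_zero).mp h2
  obtain ⟨w1, hw1⟩ := hgw
  have hw1p : 0 < w1 := by
    rcases mul_pos_iff.mp (hw1 ▸ hwpos) with ⟨_, h2⟩ | ⟨h1, _⟩
    · exact h2
    · linarith
  have hw12 : w1^2 = u1*v1 := by
    have h0 : g^2 * (w1^2) = g^2 * (u1*v1) := by
      rw [hw1] at hw2; rw [hu1, hv1] at hw2; linear_combination hw2
    exact mul_left_cancel₀ (pow_ne_zero 2 (ne_of_gt hgz)) h0
  obtain ⟨p, hp_pos, hp⟩ := sq_of_coprime_pos hu1p cop1 hw12.symm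
  obtain ⟨q, hq_pos, hq⟩ := sq_of_coprime_pos hv1p cop1.symm
    (by rw [mul_comm]; exact hw12.symm)
  have hw1pq : w1 = p*q := by
    have h0 : (w1 - p*q)*(w1 + p*q) = 0 := by
      rw [hp, hq] at hw12; linear_combination hw12
    rcases mul_eq_zero.mp h0 with h1 | h1
    · linarith [sub_eq_zero.mp h1]
    · nlinarith
  have hgy : g ∣ y := by
    have h2 : g^2 ∣ y^2 := ⟨w1^2 + (u1+v1)*w1, by
      rw [hy2, hw1, hu1, hv1]; ring⟩
    exact (Int.pow_dvd_pow_iff two_ne_zero).mp h2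
  obtain ⟨y1, hy1e⟩ := hgy
  have hy12 : y1^2 = (p*q)*(p^2 + p*q + q^2) := by
    have h0 : g^2 * (y1^2) = g^2 * ((p*q)*(p^2 + p*q + q^2)) := by
      calc g^2 * (y1^2) = (g*y1)^2 := by ring
        _ = y^2 := by rw [hy1e]
        _ = w^2 + (u+v)*w := hy2
        _ = (g*w1)^2 + (g*u1 + g*v1)*(g*w1) := by rw [hw1, hu1, hv1]
        _ = g^2*(w1^2 + (u1+v1)*w1) := by ring
        _ = g^2*((p*q)^2 + (p^2+q^2)*(p*q)) := by rw [hw1pq, hp, hq]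
        _ = g^2 * ((p*q)*(p^2 + p*q + q^2)) := by ring
    exact mul_left_cancel₀ (pow_ne_zero 2 (ne_of_gt hgz)) h0
  have cop_pq : IsCoprime p q := by
    have h1 : IsCoprime (p^2) (q^2) := by rw [← hp, ← hq]; exact cop1
    exact (IsCoprime.pow_left_iff two_pos).mp ((IsCoprime.pow_right_iff two_pos).mp h1)
  have copS_p : IsCoprime (p^2+p*q+q^2) p := by
    have h1 : IsCoprime (q^2) p := cop_pq.symm.pow_left
    have h2 := h1.add_mul_left_left (p + q)
    have he : q^2 + p*(p+q) = p^2 + p*q + q^2 := by ring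
    rwa [he] at h2
  have copS_q : IsCoprime (p^2+p*q+q^2) q := by
    have h1 : IsCoprime (p^2) q := cop_pq.pow_left
    have h2 := h1.add_mul_left_left (p + q)
    have he : p^2 + q*(p+q) = p^2 + p*q + q^2 := by ring
    rwa [he] at h2
  have cop3 : IsCoprime (p*q) (p^2+p*q+q^2) := copS_p.symm.mul_left copS_q.symm
  have hpq_pos : 0 < p*q := mul_pos hp_pos hq_pos
  have hS_pos : 0 < p^2 + p*q + q^2 := by nlinarith
  obtain ⟨c1, hc1_pos, hc1⟩ := sq_of_coprime_pos hpq_pos cop3 hy12.symm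
  obtain ⟨c2, hc2_pos, hc2⟩ := sq_of_coprime_pos hS_pos cop3.symm
    (by rw [mul_comm]; exact hy12.symm)
  obtain ⟨p1, hp1_pos, hp1⟩ := sq_of_coprime_pos hp_pos cop_pq hc1
  obtain ⟨q1, hq1_pos, hq1⟩ := sq_of_coprime_pos hq_pos cop_pq.symm
    (by rw [mul_comm]; exact hc1)
  have final : p1^4 + p1^2*q1^2 + q1^4 = c2^2 := by
    rw [hp1, hq1] at hc2; linear_combination hc2
  exact quartic_int p1 q1 c2 (ne_of_gt hp1_pos) (ne_of_gt hq1_pos) final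

theorem no_axis_resonance (n₁ x y : ℤ) (hn : n₁ ≠ 0)
    (hx : (x, y) ≠ (0, 0)) (hnx : (n₁ - x, y) ≠ (0, 0))
    (h : (n₁ : ℚ) / (n₁^2) = (x : ℚ) / (x^2 + y^2) + ((n₁ - x : ℤ) : ℚ) / ((n₁ - x)^2 + y^2)) :
    n₁ * x * (n₁ - x) = 0 := by
  by_contra hcon
  have hx2 : x ≠ 0 := fun h0 => hcon (by rw [h0]; ring)
  have hv2 : n₁ - x ≠ 0 := fun h0 => hcon (by rw [h0]; ring)
  have hnq : (n₁:ℚ) ≠ 0 := Int.cast_ne_zero.mpr hn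
  have hxq : (x:ℚ) ≠ 0 := Int.cast_ne_zero.mpr hx2
  have hvq : ((n₁ - x : ℤ):ℚ) ≠ 0 := Int.cast_ne_zero.mpr hv2
  have hd1 : (x:ℚ)^2 + (y:ℚ)^2 ≠ 0 := by positivity
  have hd2 : ((n₁:ℚ) - x)^2 + (y:ℚ)^2 ≠ 0 := by
    push_cast at hvq
    have : ((n₁:ℚ) - x) ≠ 0 := hvq
    positivity
  push_cast at h
  field_simp at h
  have keyQ : ((y:ℚ)^2 - x*(n₁-x))^2 = (x*(n₁-x))*(n₁:ℚ)^2 := by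
    have key2 : (((y:ℚ)^2 - x*(n₁-x))^2 - (x*(n₁-x))*(n₁:ℚ)^2) * n₁ = 0 := by
      linear_combination (n₁:ℚ) * h
    rcases mul_eq_zero.mp key2 with h0 | h0
    · linarith [sub_eq_zero.mp h0]
    · exact absurd h0 hnq
  have keyZ : (y^2 - x*(n₁-x))^2 = (x*(n₁-x))*(x + (n₁-x))^2 := by
    have : ((((y^2 - x*(n₁-x))^2 : ℤ)) : ℚ) = (((x*(n₁-x))*(x + (n₁-x))^2 : ℤ) : ℚ) := by
      push_cast
      linear_combination keyQ
    exact_mod_cast this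
  have hprod : 0 < x * (n₁ - x) := by
    rcases lt_trichotomy (x * (n₁ - x)) 0 with h1 | h1 | h1
    · exfalso
      have hs : 0 < (x + (n₁-x))^2 := by
        have hne : x + (n₁ - x) ≠ 0 := by intro h2; apply hn; linarith
        positivity
      nlinarith [sq_nonneg (y^2 - x*(n₁-x))]
    · exfalso
      rcases mul_eq_zero.mp h1 with h2 | h2
      · exact hx2 h2
      · exact hv2 h2
    · exact h1
  rcases mul_pos_iff.mp hprod with ⟨h1, h2⟩ | ⟨h1, h2⟩
  · exact main2 x (n₁ - x) y h1 h2 keyZ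
  · exact main2 (-x) (-(n₁ - x)) y (by linarith) (by linarith)
      (by linear_combination keyZ)
end

section
/- For all natural numbers $m, \ell$ with $m \neq \ell$, the wavenumber $n = (m^4, m\ell^3)$ belongs to $\Lambda$, witnessed by $(x,y) = (\ell^4, -m^3\ell)$; i.e., $\frac{m^4}{m^8 + m^2\ell^6} - \frac{\ell^4}{\ell^8 + m^6\ell^2} - \frac{m^4 - \ell^4}{(m^4-\ell^4)^2 + (m\ell^3 + m^3\ell)^2} = 0$, with $m^4 \neq 0$, $\ell^4 \neq 0$, and $m^4 - \ell^4 \neq 0$. -/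
theorem infinite_elements_in_Lambda (m ℓ : ℕ) (hm : 0 < m) (hℓ : 0 < ℓ) (hne : m ≠ ℓ) :
    ((m : ℚ)^4 / ((m : ℚ)^8 + (m : ℚ)^2 * (ℓ : ℚ)^6)
      - (ℓ : ℚ)^4 / ((ℓ : ℚ)^8 + (m : ℚ)^6 * (ℓ : ℚ)^2)
      - ((m : ℚ)^4 - (ℓ : ℚ)^4) /
          (((m : ℚ)^4 - (ℓ : ℚ)^4)^2 + ((m : ℚ) * (ℓ : ℚ)^3 + (m : ℚ)^3 * (ℓ : ℚ))^2) = 0)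
    ∧ (m : ℤ)^4 ≠ 0 ∧ (ℓ : ℤ)^4 ≠ 0 ∧ (m : ℤ)^4 - (ℓ : ℤ)^4 ≠ 0 := by
  have hmQ : (m : ℚ) ≠ 0 := Nat.cast_ne_zero.mpr hm.ne'
  have hlQ : (ℓ : ℚ) ≠ 0 := Nat.cast_ne_zero.mpr hℓ.ne'
  have hmlQ : (m : ℚ) ≠ (ℓ : ℚ) := by exact_mod_cast hne
  have h1 : (m : ℚ)^8 + (m : ℚ)^2 * (ℓ : ℚ)^6 ≠ 0 := by positivity
  have h2 : (ℓ : ℚ)^8 + (m : ℚ)^6 * (ℓ : ℚ)^2 ≠ 0 := by positivity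
  have hsub : (m : ℚ) - (ℓ : ℚ) ≠ 0 := sub_ne_zero.mpr hmlQ
  have h3 : ((m : ℚ)^4 - (ℓ : ℚ)^4)^2 + ((m : ℚ) * (ℓ : ℚ)^3 + (m : ℚ)^3 * (ℓ : ℚ))^2 ≠ 0 := by
    have : ((m : ℚ) * (ℓ : ℚ)^3 + (m : ℚ)^3 * (ℓ : ℚ))^2 > 0 := by positivity
    positivity
  refine ⟨?_, ?_, ?_, ?_⟩
  · field_simp
    ring
  · exact pow_ne_zero _ (by exact_mod_cast hm.ne')
  · exact pow_ne_zero _ (by exact_mod_cast hℓ.ne')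
  · intro h
    have h4 : (m : ℤ)^4 = (ℓ : ℤ)^4 := by linarith
    have h4' : m ^ 4 = ℓ ^ 4 := by exact_mod_cast h4
    exact hne (Nat.pow_left_injective (by norm_num) h4')
end

section
/- Let $n_1, x, y$ be integers with $n_1 > x > 0$ satisfying $y^4 - 2x(n_1-x)y^2 + x^2(n_1-x)^2 - n_1^2 x(n_1-x) = 0$. Then $x(n_1-x)$ is a perfect square, say $x(n_1-x) = p^2$ with $p \in \mathbb{N}$, and moreover $y^2 = p^2 + n_1 p$, so that $p^2 + n_1 p$ is also a perfect square. -/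
theorem biquadratic_forces_square (n₁ x y : ℤ) (hx : 0 < x) (hxn : x < n₁)
    (h : y^4 - 2*x*(n₁ - x)*y^2 + x^2*(n₁ - x)^2 - n₁^2 * x * (n₁ - x) = 0) :
    ∃ p : ℕ, x * (n₁ - x) = (p : ℤ)^2 ∧ y^2 = (p : ℤ)^2 + n₁ * p
      ∧ ∃ k : ℤ, (p : ℤ)^2 + n₁ * p = k^2 := by
  set A := x * (n₁ - x) with hA
  have hn₁ : 0 < n₁ := by linarith
  have hApos : 0 < A := mul_pos hx (by linarith)
  have key : (y^2 - A)^2 = n₁^2 * A := by nlinarith [h]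
  have hdvd : n₁ ∣ y^2 - A :=
    (Int.pow_dvd_pow_iff two_ne_zero).mp ⟨A, key⟩
  obtain ⟨q, hq⟩ := hdvd
  have hAq : A = q^2 := by
    have h2 : (n₁ * q)^2 = n₁^2 * A := by rw [← hq]; exact key
    nlinarith [h2]
  have hAlt : A < n₁^2 := by nlinarith
  have hqlt : q < n₁ := by nlinarith
  have hy2 : y^2 = q^2 + n₁ * q := by nlinarith [hq]
  have hqpos : 0 < q := by
    rcases lt_trichotomy q 0 with hneg | hzero | hpos
    · nlinarith [sq_nonneg y]
    · simp [hzero] at hAq; omega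
    · exact hpos
  refine ⟨q.natAbs, ?_, ?_, y, ?_⟩ <;>
    rw [Nat.cast_natAbs] <;> simp [abs_of_pos hqpos] <;> linarith [hAq, hy2]
end

section
/- Let $q, r$ be relatively prime positive integers such that $qr(q^2 + qr + r^2)$ is a perfect square. Then there exist positive integers $s, t, u$ with $q = s^2$, $r = t^2$, and $s^4 + s^2 t^2 + t^4 = u^2$. -/
lemma sq_of_cop_mul (a b c : ℕ) (h : Nat.Coprime a b) (he : a * b = c ^ 2) :
    ∃ d, a = d ^ 2 :=
  exists_eq_pow_of_mul_eq_pow (Nat.isUnit_iff.mpr h) he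

theorem square_product_reduction (q r : ℕ) (hq : 0 < q) (hr : 0 < r)
    (hcop : Nat.Coprime q r) (hsq : ∃ k : ℕ, q * r * (q^2 + q*r + r^2) = k^2) :
    ∃ s t u : ℕ, 0 < s ∧ 0 < t ∧ 0 < u ∧ q = s^2 ∧ r = t^2
      ∧ s^4 + s^2 * t^2 + t^4 = u^2 := by
  obtain ⟨k, hk⟩ := hsq
  have h1 : Nat.Coprime q (q^2 + q*r + r^2) := by
    have h := (Nat.coprime_add_mul_left_right q (r^2) (q+r)).mpr (hcop.pow_right 2)
    have e : r^2 + q*(q+r) = q^2 + q*r + r^2 := by ring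
    rwa [e] at h
  have h2 : Nat.Coprime r (q^2 + q*r + r^2) := by
    have h := (Nat.coprime_add_mul_left_right r (q^2) (q+r)).mpr ((hcop.symm).pow_right 2)
    have e : q^2 + r*(q+r) = q^2 + q*r + r^2 := by ring
    rwa [e] at h
  have h3 : Nat.Coprime (q*r) (q^2 + q*r + r^2) := Nat.Coprime.mul h1 h2
  obtain ⟨u, hu⟩ := sq_of_cop_mul _ _ k h3.symm (by rw [mul_comm]; exact hk)
  obtain ⟨d, hd⟩ := sq_of_cop_mul _ _ _ h3 hk
  obtain ⟨s, hs⟩ := sq_of_cop_mul _ _ _ hcop hd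
  obtain ⟨t, ht⟩ := sq_of_cop_mul _ _ _ hcop.symm (by rw [mul_comm] at hd; exact hd)
  refine ⟨s, t, u, ?_, ?_, ?_, hs, ht, ?_⟩
  · by_contra h; simp at h; subst h; simp at hs; omega
  · by_contra h; simp at h; subst h; simp at ht; omega
  · by_contra h; simp at h; subst h; simp at hu; nlinarith
  · nlinarith [hu, hs, ht]
end

section
/- There are no relatively prime positive integers $q, r$ such that $qr(q^2 + qr + r^2)$ is a perfect square. -/
lemma coprime_of_primes {a b : ℤ} (h : ∀ p : ℤ, Prime p → p ∣ a → p ∣ b → False) :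
    IsCoprime a b := by
  rw [Int.isCoprime_iff_gcd_eq_one]
  by_contra hg
  obtain ⟨p, hp, hpd⟩ := Nat.exists_prime_and_dvd hg
  have hpz : Prime (p : ℤ) := Nat.prime_iff_prime_int.mp hp
  exact h _ hpz (dvd_trans (Int.natCast_dvd_natCast.mpr hpd) (Int.gcd_dvd_left _ _))
    (dvd_trans (Int.natCast_dvd_natCast.mpr hpd) (Int.gcd_dvd_right _ _))

lemma odd_sq_mod4 {a : ℤ} (h : Odd a) : ∃ t : ℤ, a ^ 2 = 4 * t + 1 := by
  obtain ⟨k, rfl⟩ := h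
  exact ⟨k * k + k, by ring⟩

lemma prime_odd_of_dvd_odd {p a : ℤ} (hp : Prime p) (ha : Odd a) (hpa : p ∣ a) : Odd p := by
  rcases Int.even_or_odd p with he | ho
  · exfalso
    have : Even a := by
      obtain ⟨c, hc⟩ := hpa
      rw [hc]
      exact he.mul_right c
    exact (Int.not_odd_iff_even.mpr this) ha
  · exact ho

lemma two_not_dvd_odd {a : ℤ} (ha : Odd a) : ¬ (2:ℤ) ∣ a := by
  intro h
  exact (Int.not_odd_iff_even.mpr (even_iff_two_dvd.mpr h)) ha

lemma prime_dvd_two_even {p : ℤ} (hp : Prime p) (h : p ∣ 2) : Even p := by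
  have h1 : p.natAbs ∣ 2 := by
    have := Int.natAbs_dvd_natAbs.mpr h
    simpa using this
  have h2 : p.natAbs = 2 :=
    (Nat.prime_two.eq_one_or_self_of_dvd _ h1).resolve_left
      (Int.prime_iff_natAbs_prime.mp hp).one_lt.ne'
  rw [Int.even_iff]
  omega

-- From a quartic solution with x odd, y even, produce the system.
lemma tosystem {x y z : ℤ} (hx : 0 < x) (hy : 0 < y) (hxo : Odd x) (hye : Even y)
    (hco : IsCoprime x y) (heq : x^4 + x^2*y^2 + y^4 = z^2) :
    ∃ g h : ℤ, 0 < g ∧ 0 < h ∧ Odd g ∧ Even h ∧ IsCoprime g h ∧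
      x^2 + y^2 = g^2 + h^2 ∧ x*y = 2*(g*h) := by
  set A : ℤ := x^2 + x*y + y^2 with hA
  set B : ℤ := x^2 - x*y + y^2 with hB
  have hAB : A * B = z^2 := by rw [hA, hB]; linear_combination heq
  have hApos : 0 < A := by rw [hA]; nlinarith [sq_nonneg (x+y), sq_nonneg x, sq_nonneg y]
  have hBpos : 0 < B := by rw [hB]; nlinarith [sq_nonneg (x-y), sq_nonneg x, sq_nonneg y]
  have hAodd : Odd A := by
    rw [hA]
    exact ((hxo.pow).add_even (hye.mul_left x)).add_even (Int.even_pow.mpr ⟨hye, two_ne_zero⟩)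
  have hBodd : Odd B := by
    rw [hB]
    exact ((hxo.pow).sub_even (hye.mul_left x)).add_even (Int.even_pow.mpr ⟨hye, two_ne_zero⟩)
  have hcopAB : IsCoprime A B := by
    apply coprime_of_primes
    intro p hp hpA hpB
    have hpodd : Odd p := prime_odd_of_dvd_odd hp hAodd hpA
    have hpxy : p ∣ x * y := by
      have h2 : p ∣ 2 * (x*y) := by
        have : 2*(x*y) = A - B := by rw [hA, hB]; ring
        rw [this]; exact dvd_sub hpA hpB
      rcases hp.dvd_mul.mp h2 with h' | h'
      · exact absurd (prime_dvd_two_even hp h') (Int.not_even_iff_odd.mpr hpodd)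
      · exact h'
    rcases hp.dvd_mul.mp hpxy with hpx | hpy
    · have hpy2 : p ∣ y^2 := by
        have : y^2 = A - x^2 - x*y := by rw [hA]; ring
        rw [this]
        exact dvd_sub (dvd_sub hpA (dvd_pow hpx two_ne_zero)) (hpx.mul_right y)
      have hpy : p ∣ y := hp.dvd_of_dvd_pow hpy2
      exact hp.not_isUnit (hco.isUnit_of_dvd' hpx hpy)
    · have hpx2 : p ∣ x^2 := by
        have : x^2 = A - x*y - y^2 := by rw [hA]; ring
        rw [this]
        exact dvd_sub (dvd_sub hpA (hpy.mul_left x)) (dvd_pow hpy two_ne_zero)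
      have hpx : p ∣ x := hp.dvd_of_dvd_pow hpx2
      exact hp.not_isUnit (hco.isUnit_of_dvd' hpx hpy)
  -- extract square roots
  obtain ⟨u0, hu0⟩ := Int.sq_of_isCoprime hcopAB hAB
  have hBA : B * A = z^2 := by rw [mul_comm]; exact hAB
  obtain ⟨v0, hv0⟩ := Int.sq_of_isCoprime hcopAB.symm hBA
  have hu : |u0|^2 = A := by
    rcases hu0 with h' | h'
    · rw [sq_abs]; exact h'.symm
    · exfalso; nlinarith [sq_nonneg u0]
  have hv : |v0|^2 = B := by
    rcases hv0 with h' | h'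
    · rw [sq_abs]; exact h'.symm
    · exfalso; nlinarith [sq_nonneg v0]
  set u : ℤ := |u0| with hudef
  set v : ℤ := |v0| with hvdef
  have hunn : 0 ≤ u := abs_nonneg u0
  have hvnn : 0 ≤ v := abs_nonneg v0
  have huodd : Odd u := by
    rcases Int.even_or_odd u with h' | h'
    · exfalso
      exact (Int.not_odd_iff_even.mpr (Int.even_pow.mpr ⟨h', two_ne_zero⟩)) (hu ▸ hAodd)
    · exact h'
  have hvodd : Odd v := by
    rcases Int.even_or_odd v with h' | h'
    · exfalso
      exact (Int.not_odd_iff_even.mpr (Int.even_pow.mpr ⟨h', two_ne_zero⟩)) (hv ▸ hBodd)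
    · exact h'
  have huv : v < u := by
    nlinarith [mul_pos hx hy]
  have hvpos : 0 < v := by nlinarith
  have hcopuv : IsCoprime u v := by
    have h2 : IsCoprime (u^2) (v^2) := by rw [hu, hv]; exact hcopAB
    exact (IsCoprime.of_isCoprime_of_dvd_left
      (IsCoprime.of_isCoprime_of_dvd_right h2 (dvd_pow_self v two_ne_zero))
      (dvd_pow_self u two_ne_zero))
  obtain ⟨α, hα⟩ := huodd.add_odd hvodd
  obtain ⟨β, hβ⟩ := huodd.sub_odd hvodd
  have hαpos : 0 < α := by linarith
  have hβpos : 0 < β := by linarith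
  have key1 : α^2 + β^2 = x^2 + y^2 := by
    have h4 : 4*(α^2 + β^2) = 4*(x^2+y^2) := by
      linear_combination -(u+v+2*α)*hα - (u-v+2*β)*hβ + 2*hu + 2*hv
    linarith
  have key2 : x*y = 2*(α*β) := by
    have h4 : 4*(x*y) = 4*(2*(α*β)) := by
      linear_combination 2*(u-v)*hα + 4*α*hβ - 2*hu + 2*hv
    linarith
  have hcopαβ : IsCoprime α β := by
    obtain ⟨c, d, hcd⟩ := hcopuv
    refine ⟨c+d, c-d, ?_⟩
    have h2 : 2*((c+d)*α + (c-d)*β) = 2*1 := by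
      linear_combination 2*hcd - c*hα - d*hα - c*hβ + d*hβ
    linarith
  have hsumodd : Odd (α^2 + β^2) := by
    rw [key1]
    exact (hxo.pow).add_even (Int.even_pow.mpr ⟨hye, two_ne_zero⟩)
  rcases Int.even_or_odd α with hαe | hαo
  · have hβo : Odd β := by
      rcases Int.even_or_odd β with h' | h'
      · exfalso
        exact (Int.not_odd_iff_even.mpr
          ((Int.even_pow.mpr ⟨hαe, two_ne_zero⟩).add (Int.even_pow.mpr ⟨h', two_ne_zero⟩))) hsumodd
      · exact h'
    exact ⟨β, α, hβpos, hαpos, hβo, hαe, hcopαβ.symm, by linarith [key1], by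
      rw [key2]; ring⟩
  · have hβe : Even β := by
      rcases Int.even_or_odd β with h' | h'
      · exact h'
      · exfalso
        exact (Int.not_odd_iff_even.mpr
          ((Int.odd_pow.mpr (Or.inl hαo)).add_odd (Int.odd_pow.mpr (Or.inl h')))) hsumodd
    exact ⟨α, β, hαpos, hβpos, hαo, hβe, hcopαβ, key1.symm, key2⟩

-- Core descent on the system x²+y² = g²+h², xy = 2gh.
lemma descent {x y g h : ℤ} (hx : 0 < x) (hg : 0 < g) (hh : 0 < h)
    (hxo : Odd x) (hgo : Odd g) (hhe : Even h)
    (hxy : IsCoprime x y) (hgh : IsCoprime g h)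
    (e1 : x^2 + y^2 = g^2 + h^2) (e2 : x*y = 2*(g*h)) :
    ∃ m n w : ℤ, m ≠ 0 ∧ n ≠ 0 ∧ IsCoprime m n ∧ w^2 < x^2 ∧
      m^4 + m^2*n^2 + n^4 = w^2 := by
  set a : ℤ := (Int.gcd x g : ℤ) with hadef
  have hane : a ≠ 0 := by
    simp only [hadef, ne_eq, Int.natCast_eq_zero, Int.gcd_eq_zero_iff]
    rintro ⟨rfl, -⟩; exact absurd hx (lt_irrefl 0)
  have hapos : 0 < a := lt_of_le_of_ne (Int.natCast_nonneg _) (Ne.symm hane)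
  obtain ⟨x₁, hx₁⟩ : a ∣ x := Int.gcd_dvd_left _ _
  obtain ⟨g₁, hg₁⟩ : a ∣ g := Int.gcd_dvd_right _ _
  have hcop1 : IsCoprime x₁ g₁ := by
    rw [Int.isCoprime_iff_gcd_eq_one]
    have h1 : x / a = x₁ := by rw [hx₁]; exact Int.mul_ediv_cancel_left x₁ hane
    have h2 : g / a = g₁ := by rw [hg₁]; exact Int.mul_ediv_cancel_left g₁ hane
    rw [← h1, ← h2, hadef]
    exact Int.gcd_div_gcd_div_gcd (by
      rcases Int.natCast_pos.mp hapos with h'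
      exact h')
  clear_value a
  clear hadef
  subst hx₁ hg₁
  obtain ⟨haodd, hx₁odd⟩ := (Int.odd_mul.mp hxo)
  obtain ⟨-, hg₁odd⟩ := (Int.odd_mul.mp hgo)
  have hx₁pos : 0 < x₁ := by
    rcases mul_pos_iff.mp hx with ⟨-, h'⟩ | ⟨h', -⟩
    · exact h'
    · exact absurd hapos (not_lt.mpr h'.le)
  have hg₁pos : 0 < g₁ := by
    rcases mul_pos_iff.mp hg with ⟨-, h'⟩ | ⟨h', -⟩
    · exact h'
    · exact absurd hapos (not_lt.mpr h'.le)
  -- x₁ divides h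
  have hdvd1 : a * x₁ ∣ 2 * (a * g₁ * h) := ⟨y, by linarith [e2]⟩
  have hcopx2 : IsCoprime (a * x₁) 2 := by
    obtain ⟨k, hk⟩ := hxo
    exact ⟨1, -k, by linarith⟩
  have hdvd2 : a * x₁ ∣ (a * g₁ * h) := by
    apply IsCoprime.dvd_of_dvd_mul_left hcopx2
    exact hdvd1
  have hdvd3 : x₁ ∣ g₁ * h := by
    have : a * x₁ ∣ a * (g₁ * h) := by rwa [← mul_assoc]
    exact (mul_dvd_mul_iff_left hane).mp this
  obtain ⟨h₁, hh₁⟩ : x₁ ∣ h := by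
    apply IsCoprime.dvd_of_dvd_mul_left hcop1
    exact hdvd3
  subst hh₁
  have hh₁pos : 0 < h₁ := by
    rcases mul_pos_iff.mp hh with ⟨-, h'⟩ | ⟨h', -⟩
    · exact h'
    · exact absurd hx₁pos (not_lt.mpr h'.le)
  have hh₁even : Even h₁ := by
    rcases Int.even_mul.mp hhe with h' | h'
    · exact absurd h' (Int.not_even_iff_odd.mpr hx₁odd)
    · exact h'
  -- recover y
  have hy' : y = 2 * (g₁ * h₁) := by
    apply mul_left_cancel₀ (mul_ne_zero hane (ne_of_gt hx₁pos))
    linear_combination e2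
  subst hy'
  -- master equation
  have master : a^2 * (x₁^2 - g₁^2) = h₁^2 * (x₁^2 - 4*g₁^2) := by
    linear_combination e1
  -- a and h₁ are coprime
  have hcopah : IsCoprime a h₁ := by
    apply coprime_of_primes
    intro p hp hpa hph
    exact hp.not_isUnit (hgh.isUnit_of_dvd' (hpa.mul_right g₁) (hph.mul_left x₁))
  -- extract k
  have hdvd4 : a^2 ∣ h₁^2 * (x₁^2 - 4*g₁^2) := ⟨x₁^2 - g₁^2, by linarith [master]⟩
  obtain ⟨k, hk1⟩ : a^2 ∣ (x₁^2 - 4*g₁^2) :=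
    IsCoprime.dvd_of_dvd_mul_left (hcopah.pow) hdvd4
  have hk2 : x₁^2 - g₁^2 = h₁^2 * k := by
    apply mul_left_cancel₀ (pow_ne_zero 2 hane)
    linear_combination master + h₁^2 * hk1
  -- k divides 3
  have d1 : k ∣ 3*g₁^2 := ⟨h₁^2 - a^2, by linear_combination hk2 - hk1⟩
  have d2 : k ∣ 3*x₁^2 := ⟨4*h₁^2 - a^2, by linear_combination 4*hk2 - hk1⟩
  have hk3 : k ∣ 3 := by
    obtain ⟨c, d, hcd⟩ := hcop1.pow (m := 2) (n := 2)
    have h3 : (3:ℤ) = c*(3*x₁^2) + d*(3*g₁^2) := by linear_combination -3*hcd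
    rw [h3]
    exact dvd_add (d2.mul_left c) (d1.mul_left d)
  have hk0 : k ≠ 0 := by
    rintro rfl
    have hg₁0 : g₁^2 = 0 := by linarith
    exact absurd (pow_eq_zero_iff two_ne_zero |>.mp hg₁0) (ne_of_gt hg₁pos)
  have hkcases : k = 1 ∨ k = -1 ∨ k = 3 ∨ k = -3 := by
    have h1 : k.natAbs ∣ 3 := by
      have := Int.natAbs_dvd_natAbs.mpr hk3
      simpa using this
    have h2 : k.natAbs = 1 ∨ k.natAbs = 3 :=
      (Nat.Prime.eq_one_or_self_of_dvd Nat.prime_three _ h1)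
    rcases Int.natAbs_eq k with h'|h' <;> omega
  obtain ⟨s, hs⟩ := odd_sq_mod4 haodd
  obtain ⟨t, ht⟩ := odd_sq_mod4 hx₁odd
  obtain ⟨r, hr⟩ := odd_sq_mod4 hg₁odd
  rcases hkcases with rfl | rfl | rfl | rfl
  · -- k = 1 : a² + (2g₁)² = x₁²
    have triple : PythagoreanTriple a (2*g₁) x₁ := by
      show a*a + 2*g₁*(2*g₁) = x₁*x₁
      linear_combination -hk1
    have hGcd : Int.gcd a (2*g₁) = 1 := by
      rw [← Int.isCoprime_iff_gcd_eq_one]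
      apply coprime_of_primes
      intro p hp hpa hp2g
      have hpodd := prime_odd_of_dvd_odd hp haodd hpa
      rcases hp.dvd_mul.mp hp2g with h' | h'
      · exact (Int.not_even_iff_odd.mpr hpodd) (prime_dvd_two_even hp h')
      · have hpx : p ∣ x₁ := by
          apply hp.dvd_of_dvd_pow (n := 2)
          have hx2 : x₁^2 = a^2*1 + 4*g₁^2 := by linear_combination hk1
          rw [hx2]
          exact dvd_add ((dvd_pow hpa two_ne_zero).mul_right 1)
            ((dvd_pow h' two_ne_zero).mul_left 4)
        exact hp.not_isUnit (hcop1.isUnit_of_dvd' hpx h')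
    obtain ⟨m, n, hm1, hm2, hm3, hmn, -, -⟩ :=
      PythagoreanTriple.coprime_classification' triple hGcd (Int.odd_iff.mp haodd) hx₁pos
    have hg₁mn : g₁ = m*n := by linarith
    have heq2 : m^4 + m^2*n^2 + n^4 = h₁^2 := by
      linear_combination hk2 - (x₁ + m^2 + n^2)*hm3 + (g₁ + m*n)*hg₁mn
    have hmn0 : m ≠ 0 ∧ n ≠ 0 := by
      rw [← mul_ne_zero_iff, ← hg₁mn]
      exact ne_of_gt hg₁pos
    refine ⟨m, n, h₁, hmn0.1, hmn0.2, Int.isCoprime_iff_gcd_eq_one.mpr hmn, ?_, heq2⟩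
    have h1 : h₁^2 = x₁^2 - g₁^2 := by linarith
    nlinarith [mul_pos hg₁pos hg₁pos, mul_pos hx₁pos hx₁pos, mul_pos hapos hx₁pos,
      sq_nonneg (a*x₁ - x₁), mul_pos (mul_pos hapos hx₁pos) hx₁pos]
  · -- k = -1 : impossible mod 4
    exfalso
    have key : 4*(t + s - g₁*g₁) = -2 := by linear_combination hk1 - ht - hs
    obtain ⟨P, hP⟩ : ∃ P : ℤ, 4*P = -2 := ⟨_, key⟩
    omega
  · -- k = 3 : impossible mod 4
    exfalso
    obtain ⟨w, hw⟩ := hh₁even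
    have key : 12*(r + s - w*w) = -6 := by
      linear_combination (hk2 - hk1) - 3*hr - 3*hs + 3*(h₁+2*w)*hw
    obtain ⟨P, hP⟩ : ∃ P : ℤ, 12*P = -6 := ⟨_, key⟩
    omega
  · -- k = -3
    have e_a : x₁*x₁ + 2*h₁*(2*h₁) = a*a := by
      apply mul_left_cancel₀ (show (3:ℤ) ≠ 0 by norm_num)
      linear_combination 4*hk2 - hk1
    have e_g : g₁^2 = a^2 - h₁^2 := by
      apply mul_left_cancel₀ (show (3:ℤ) ≠ 0 by norm_num)
      linear_combination hk2 - hk1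
    have triple : PythagoreanTriple x₁ (2*h₁) a := e_a
    have hGcd : Int.gcd x₁ (2*h₁) = 1 := by
      rw [← Int.isCoprime_iff_gcd_eq_one]
      apply coprime_of_primes
      intro p hp hpx hp2h
      have hpodd := prime_odd_of_dvd_odd hp hx₁odd hpx
      rcases hp.dvd_mul.mp hp2h with h' | h'
      · exact (Int.not_even_iff_odd.mpr hpodd) (prime_dvd_two_even hp h')
      · have hpa : p ∣ a := by
          apply hp.dvd_of_dvd_pow (n := 2)
          have ha2 : a^2 = x₁^2 + 4*h₁^2 := by linear_combination -e_a
          rw [ha2]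
          exact dvd_add (dvd_pow hpx two_ne_zero) ((dvd_pow h' two_ne_zero).mul_left 4)
        have hpg : p ∣ g₁ := by
          apply hp.dvd_of_dvd_pow (n := 2)
          rw [e_g]
          exact dvd_sub (dvd_pow hpa two_ne_zero) (dvd_pow h' two_ne_zero)
        exact hp.not_isUnit (hcop1.isUnit_of_dvd' hpx hpg)
    obtain ⟨m, n, hm1, hm2, hm3, hmn, -, -⟩ :=
      PythagoreanTriple.coprime_classification' triple hGcd (Int.odd_iff.mp hx₁odd) hapos
    have hh₁mn : h₁ = m*n := by linarith
    have heq2 : m^4 + m^2*n^2 + n^4 = g₁^2 := by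
      linear_combination -e_g - (a + m^2 + n^2)*hm3 + (h₁ + m*n)*hh₁mn
    have hmn0 : m ≠ 0 ∧ n ≠ 0 := by
      rw [← mul_ne_zero_iff, ← hh₁mn]
      exact ne_of_gt hh₁pos
    refine ⟨m, n, g₁, hmn0.1, hmn0.2, Int.isCoprime_iff_gcd_eq_one.mpr hmn, ?_, heq2⟩
    nlinarith [mul_pos hh₁pos hh₁pos, mul_pos hx₁pos hx₁pos, mul_pos hapos hapos,
      mul_pos (mul_pos hapos hapos) (mul_pos hx₁pos hx₁pos)]

lemma IsCoprime.absInt {a b : ℤ} (h : IsCoprime a b) : IsCoprime |a| |b| := by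
  rcases abs_choice a with h1 | h1 <;> rcases abs_choice b with h2 | h2 <;> rw [h1, h2]
  · exact h
  · exact h.neg_right
  · exact h.neg_left
  · exact h.neg_left.neg_right

-- one step of descent for a quartic solution with x odd, y even
lemma step {x y z : ℤ} (hx : 0 < x) (hy : 0 < y) (hxo : Odd x) (hye : Even y)
    (hco : IsCoprime x y) (heq : x^4 + x^2*y^2 + y^4 = z^2) :
    ∃ m n w : ℤ, m ≠ 0 ∧ n ≠ 0 ∧ IsCoprime m n ∧ w^2 < z^2 ∧
      m^4 + m^2*n^2 + n^4 = w^2 := by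
  obtain ⟨g, h, hg, hh, hgo, hhe, hgh, e1, e2⟩ := tosystem hx hy hxo hye hco heq
  obtain ⟨m, n, w, hm, hn, hmn, hwx, heq2⟩ := descent hx hg hh hxo hgo hhe hco hgh e1 e2
  refine ⟨m, n, w, hm, hn, hmn, ?_, heq2⟩
  have hxz : x^2 < z^2 := by
    nlinarith [mul_pos hx hx, mul_pos hy hy, mul_pos (mul_pos hx hx) (mul_pos hy hy), mul_pos (mul_pos hy hy) (mul_pos hy hy)]
  linarith

lemma no_quartic : ∀ Z : ℕ, ∀ x y z : ℤ, 0 < x → 0 < y → IsCoprime x y →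
    z.natAbs = Z → x^4 + x^2*y^2 + y^4 = z^2 → False := by
  intro Z
  induction Z using Nat.strong_induction_on with
  | _ Z ih =>
    intro x y z hx hy hco hZ heq
    have mainstep : ∀ x' y' : ℤ, 0 < x' → 0 < y' → Odd x' → Even y' → IsCoprime x' y' →
        x'^4 + x'^2*y'^2 + y'^4 = z^2 → False := by
      intro x' y' hx' hy' hxo' hye' hco' heq'
      obtain ⟨m, n, w, hm, hn, hmn, hwz, heq2⟩ := step hx' hy' hxo' hye' hco' heq'
      have hlt : w.natAbs < Z := by
        rw [← hZ]
        by_contra hle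
        push_neg at hle
        have e1 : (↑z.natAbs:ℤ)^2 = z^2 := by rw [Int.natCast_natAbs, sq_abs]
        have e2 : (↑w.natAbs:ℤ)^2 = w^2 := by rw [Int.natCast_natAbs, sq_abs]
        have e3 : (↑z.natAbs:ℤ) ≤ (↑w.natAbs:ℤ) := by exact_mod_cast hle
        nlinarith [Int.natCast_nonneg z.natAbs, Int.natCast_nonneg w.natAbs]
      apply ih w.natAbs hlt |m| |n| w (abs_pos.mpr hm) (abs_pos.mpr hn) hmn.absInt rfl
      have sm := sq_abs m
      have sn := sq_abs n
      linear_combination heq2 + (|m|^2 + m^2)*sm + (|n|^2 + n^2)*sn + |m|^2*sn + n^2*sm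
    rcases Int.even_or_odd x with hxe | hxo <;> rcases Int.even_or_odd y with hye | hyo
    · have := hco.isUnit_of_dvd' (even_iff_two_dvd.mp hxe) (even_iff_two_dvd.mp hye)
      rw [Int.isUnit_iff] at this
      omega
    · exact mainstep y x hy hx hyo hxe hco.symm (by linear_combination heq)
    · exact mainstep x y hx hy hxo hye hco heq
    · -- both odd: impossible mod 4
      obtain ⟨s, hs⟩ := odd_sq_mod4 (hxo.pow (n := 2))
      obtain ⟨t, ht⟩ := odd_sq_mod4 (hyo.pow (n := 2))
      obtain ⟨r, hr⟩ := odd_sq_mod4 (hxo.mul hyo)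
      rcases Int.even_or_odd z with hze | hzo
      · obtain ⟨c, hc⟩ := hze
        have key : 4*(s + r + t - c*c) = -3 := by
          linear_combination heq - hs - hr - ht + (z + 2*c)*hc
        obtain ⟨P, hP⟩ : ∃ P : ℤ, 4*P = -3 := ⟨_, key⟩
        omega
      · obtain ⟨u, hu⟩ := odd_sq_mod4 hzo
        have key : 4*(s + r + t - u) = -2 := by
          linear_combination heq - hs - hr - ht + hu
        obtain ⟨P, hP⟩ : ∃ P : ℤ, 4*P = -2 := ⟨_, key⟩
        omega

theorem no_coprime_square_product :
    ¬ ∃ q r : ℕ, 0 < q ∧ 0 < r ∧ Nat.Coprime q r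
      ∧ ∃ k : ℕ, q * r * (q^2 + q*r + r^2) = k^2 := by
  rintro ⟨q, r, hq, hr, hco, k, hk⟩
  -- coprimality facts in ℕ
  have hqS : Nat.Coprime q (q^2 + q*r + r^2) := by
    have h1 : Nat.Coprime q (r^2 + q*(q+r)) :=
      (Nat.coprime_add_mul_left_right q (r^2) (q+r)).mpr (hco.pow_right 2)
    have h2 : r^2 + q*(q+r) = q^2 + q*r + r^2 := by ring
    rwa [h2] at h1
  have hrS : Nat.Coprime r (q^2 + q*r + r^2) := by
    have h1 : Nat.Coprime r (q^2 + r*(q+r)) :=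
      (Nat.coprime_add_mul_left_right r (q^2) (q+r)).mpr (hco.symm.pow_right 2)
    have h2 : q^2 + r*(q+r) = q^2 + q*r + r^2 := by ring
    rwa [h2] at h1
  have hqrS : Nat.Coprime (q*r) (q^2 + q*r + r^2) := Nat.Coprime.mul hqS hrS
  -- move to ℤ
  have hZ : ((q:ℤ)*r) * ((q:ℤ)^2 + q*r + r^2) = (k:ℤ)^2 := by exact_mod_cast hk
  have hcopZ : IsCoprime ((q:ℤ)*r) ((q:ℤ)^2 + (q:ℤ)*r + (r:ℤ)^2) := by
    have := Nat.isCoprime_iff_coprime.mpr hqrS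
    push_cast at this
    convert this using 2 <;> push_cast <;> ring
  have hqZ : (0:ℤ) < q := by exact_mod_cast hq
  have hrZ : (0:ℤ) < r := by exact_mod_cast hr
  -- q*r is a square
  obtain ⟨s0, hs0⟩ := Int.sq_of_isCoprime hcopZ hZ
  have hs0' : (q:ℤ)*r = s0^2 := by
    rcases hs0 with h' | h'
    · exact h'
    · exfalso; nlinarith [sq_nonneg s0, mul_pos hqZ hrZ]
  -- q and r are squares
  have hcopqr : IsCoprime (q:ℤ) (r:ℤ) := Nat.isCoprime_iff_coprime.mpr hco
  obtain ⟨a, ha⟩ := Int.sq_of_isCoprime hcopqr hs0'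
  have ha' : (q:ℤ) = a^2 := by
    rcases ha with h' | h'
    · exact h'
    · exfalso; nlinarith [sq_nonneg a]
  obtain ⟨b, hb⟩ := Int.sq_of_isCoprime hcopqr.symm (by linear_combination hs0' : (r:ℤ)*q = s0^2)
  have hb' : (r:ℤ) = b^2 := by
    rcases hb with h' | h'
    · exact h'
    · exfalso; nlinarith [sq_nonneg b]
  -- q² + qr + r² is a square
  obtain ⟨t, ht⟩ := Int.sq_of_isCoprime hcopZ.symm
    (by linear_combination hZ : ((q:ℤ)^2 + (q:ℤ)*r + (r:ℤ)^2) * ((q:ℤ)*r) = (k:ℤ)^2)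
  have ht' : (q:ℤ)^2 + (q:ℤ)*r + (r:ℤ)^2 = t^2 := by
    rcases ht with h' | h'
    · exact h'
    · exfalso; nlinarith [sq_nonneg t, mul_pos hqZ hrZ, sq_nonneg ((q:ℤ) + r)]
  -- build the quartic solution
  have hacop : IsCoprime a b := by
    have h2 : IsCoprime (a^2) (b^2) := by rw [← ha', ← hb']; exact hcopqr
    exact (IsCoprime.of_isCoprime_of_dvd_left
      (IsCoprime.of_isCoprime_of_dvd_right h2 (dvd_pow_self b two_ne_zero))
      (dvd_pow_self a two_ne_zero))
  have hapos : 0 < |a| := by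
    rw [abs_pos]
    rintro rfl
    simp only [ne_eq, OfNat.ofNat_ne_zero, not_false_eq_true, zero_pow] at ha'
    omega
  have hbpos : 0 < |b| := by
    rw [abs_pos]
    rintro rfl
    simp only [ne_eq, OfNat.ofNat_ne_zero, not_false_eq_true, zero_pow] at hb'
    omega
  apply no_quartic t.natAbs |a| |b| t hapos hbpos hacop.absInt rfl
  have sa := sq_abs a
  have sb := sq_abs b
  have key : a^4 + a^2*b^2 + b^4 = t^2 := by linear_combination ht' - ((q:ℤ) + a^2)*ha' - ((r:ℤ) + b^2)*hb' - b^2*ha' - (q:ℤ)*hb'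
  linear_combination key + (|a|^2 + a^2)*sa + (|b|^2 + b^2)*sb + |a|^2*sb + b^2*sa
end

section
/- Suppose $n_1, x, y$ are integers with $n_1 x (n_1 - x) \neq 0$, $y \neq 0$, and $\frac{1}{n_1} = \frac{x}{x^2+y^2} + \frac{n_1-x}{(n_1-x)^2+y^2}$. Let $d = \gcd(n_1, x)$. Then $d$ divides $y$, and $n_1' = n_1/d$, $x' = x/d$, $y' = y/d$ satisfy the same equation $\frac{1}{n_1'} = \frac{x'}{x'^2+y'^2} + \frac{n_1'-x'}{(n_1'-x')^2+y'^2}$. -/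
theorem scaling_reduction (n₁ x y : ℤ) (h0 : n₁ * x * (n₁ - x) ≠ 0) (hy : y ≠ 0)
    (h : (1 : ℚ) / (n₁ : ℚ) = (x : ℚ) / (x^2 + y^2) + ((n₁ - x : ℤ) : ℚ) / ((n₁ - x)^2 + y^2)) :
    ((Int.gcd n₁ x : ℤ)) ∣ y ∧
    (1 : ℚ) / ((n₁ / (Int.gcd n₁ x : ℤ) : ℤ) : ℚ)
      = ((x / (Int.gcd n₁ x : ℤ) : ℤ) : ℚ)
          / (((x / (Int.gcd n₁ x : ℤ) : ℤ) : ℚ)^2 + ((y / (Int.gcd n₁ x : ℤ) : ℤ) : ℚ)^2)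
        + ((n₁ / (Int.gcd n₁ x : ℤ) - x / (Int.gcd n₁ x : ℤ) : ℤ) : ℚ)
          / (((n₁ / (Int.gcd n₁ x : ℤ) - x / (Int.gcd n₁ x : ℤ) : ℤ) : ℚ)^2
              + ((y / (Int.gcd n₁ x : ℤ) : ℤ) : ℚ)^2) := by
  have hn₁ : n₁ ≠ 0 := by rintro rfl; simp at h0
  have hx : x ≠ 0 := by rintro rfl; simp at h0
  have hnx : n₁ - x ≠ 0 := by intro hh; rw [hh] at h0; simp at h0
  set d : ℤ := (Int.gcd n₁ x : ℤ) with hd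
  have hdn : d ∣ n₁ := Int.gcd_dvd_left n₁ x
  have hdx : d ∣ x := Int.gcd_dvd_right n₁ x
  have hd0 : d ≠ 0 := by
    simp only [hd, ne_eq, Int.natCast_eq_zero, Int.gcd_eq_zero_iff]
    tauto
  have hyQ : (y:ℚ) ≠ 0 := Int.cast_ne_zero.mpr hy
  have hn₁Q : (n₁:ℚ) ≠ 0 := Int.cast_ne_zero.mpr hn₁
  have hA : (x:ℚ)^2 + (y:ℚ)^2 ≠ 0 := by positivity
  have hB : ((n₁ - x : ℤ):ℚ)^2 + (y:ℚ)^2 ≠ 0 := by positivity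
  have keyZ : (y^2 - x*(n₁ - x))^2 = n₁^2 * x * (n₁ - x) := by
    have key : ((y^2 - x*(n₁ - x) : ℤ) : ℚ)^2 = ((n₁^2 * x * (n₁ - x) : ℤ):ℚ) := by
      push_cast at h ⊢
      field_simp at h
      linear_combination h
    exact_mod_cast key
  have hdnx : d ∣ n₁ - x := dvd_sub hdn hdx
  have hdvd4 : d^4 ∣ (y^2 - x*(n₁-x))^2 := by
    rw [keyZ]
    have h1 : d^2 ∣ n₁^2 := pow_dvd_pow_of_dvd hdn 2
    calc d^4 = d^2 * d * d := by ring
    _ ∣ n₁^2 * x * (n₁ - x) := mul_dvd_mul (mul_dvd_mul h1 hdx) hdnx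
  have hdvd2 : d^2 ∣ y^2 - x*(n₁-x) := by
    have : (d^2)^2 ∣ (y^2 - x*(n₁-x))^2 := by
      rw [← pow_mul]; exact hdvd4
    exact (Int.pow_dvd_pow_iff two_ne_zero).mp this
  have hdy2 : d^2 ∣ y^2 := by
    have h2 : d^2 ∣ x*(n₁-x) := by rw [sq]; exact mul_dvd_mul hdx hdnx
    have := dvd_add hdvd2 h2
    simpa using this
  have hdy : d ∣ y := (Int.pow_dvd_pow_iff two_ne_zero).mp hdy2
  refine ⟨hdy, ?_⟩
  -- cast divisions
  have cN : ((n₁ / d : ℤ) : ℚ) = (n₁ : ℚ) / (d : ℚ) := Int.cast_div_charZero hdn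
  have cX : ((x / d : ℤ) : ℚ) = (x : ℚ) / (d : ℚ) := Int.cast_div_charZero hdx
  have cY : ((y / d : ℤ) : ℚ) = (y : ℚ) / (d : ℚ) := Int.cast_div_charZero hdy
  have cS : ((n₁ / d - x / d : ℤ) : ℚ) = ((n₁ : ℚ) - (x : ℚ)) / (d : ℚ) := by
    push_cast [cN, cX]
    ring
  have hdQ : (d : ℚ) ≠ 0 := Int.cast_ne_zero.mpr hd0
  rw [cN, cX, cY, cS]
  have hscale : ∀ X Y : ℚ, X^2 + Y^2 ≠ 0 →
      (X/(d:ℚ))/((X/(d:ℚ))^2+(Y/(d:ℚ))^2) = (d:ℚ) * (X/(X^2+Y^2)) := by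
    intro X Y hXY
    field_simp
  have hBB : ((n₁:ℚ) - (x:ℚ))^2 + (y:ℚ)^2 ≠ 0 := by
    have : ((n₁ - x : ℤ):ℚ) = (n₁:ℚ) - (x:ℚ) := by push_cast; ring
    rw [← this]; exact hB
  have hcast : ((n₁ - x : ℤ):ℚ) = (n₁:ℚ) - (x:ℚ) := by push_cast; ring
  rw [hcast] at h
  rw [hscale _ _ hA, hscale _ _ hBB, one_div, inv_div, div_eq_mul_one_div, h]
  ring
end

section
/- No wavenumber on the $n_1$-axis belongs to $\Lambda$: for every nonzero integer $n_1$, $(n_1, 0) \notin \Lambda$. -/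
def Lambda : Set (ℤ × ℤ) :=
  {n | n.1 ≠ 0 ∧ ∃ x y : ℤ, x ≠ 0 ∧ n.1 - x ≠ 0 ∧
    (n.1 : ℚ) / ((n.1 : ℚ)^2 + (n.2 : ℚ)^2) - (x : ℚ) / ((x : ℚ)^2 + (y : ℚ)^2)
      - ((n.1 - x : ℤ) : ℚ) / (((n.1 - x : ℤ) : ℚ)^2 + ((n.2 - y : ℤ) : ℚ)^2) = 0}


lemma nat_four_split {a h m n : ℕ} (hah : Nat.Coprime a h) (hmn : Nat.Coprime m n)
    (heq : a * h = m * n) :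
    a = Nat.gcd a m * Nat.gcd a n ∧ h = Nat.gcd h m * Nat.gcd h n ∧
      m = Nat.gcd a m * Nat.gcd h m ∧ n = Nat.gcd a n * Nat.gcd h n := by
  refine ⟨?_, ?_, ?_, ?_⟩
  · exact ((Nat.gcd_mul_gcd_eq_iff_dvd_mul_of_coprime hmn).2 ⟨h, heq.symm⟩).symm
  · exact ((Nat.gcd_mul_gcd_eq_iff_dvd_mul_of_coprime hmn).2 ⟨a, by rw [← heq, Nat.mul_comm]⟩).symm
  · have : m ∣ a * h := ⟨n, heq⟩
    have := (Nat.gcd_mul_gcd_eq_iff_dvd_mul_of_coprime hah).2 this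
    rw [Nat.gcd_comm m a, Nat.gcd_comm m h] at this
    exact this.symm
  · have : n ∣ a * h := ⟨m, by rw [heq, Nat.mul_comm]⟩
    have := (Nat.gcd_mul_gcd_eq_iff_dvd_mul_of_coprime hah).2 this
    rw [Nat.gcd_comm n a, Nat.gcd_comm n h] at this
    exact this.symm

lemma int_four_split {X H m n : ℤ} (hX : 0 < X) (hH : 0 < H) (hm : 0 < m) (hn : 0 < n)
    (hXH : Int.gcd X H = 1) (hmn : Int.gcd m n = 1) (heq : X * H = m * n) :
    ∃ x₁ x₂ y₁ y₂ : ℤ, 0 < x₁ ∧ 0 < x₂ ∧ 0 < y₁ ∧ 0 < y₂ ∧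
      X = x₁ * x₂ ∧ H = y₁ * y₂ ∧ m = x₁ * y₁ ∧ n = x₂ * y₂ := by
  have hXa : (X.natAbs : ℤ) = X := Int.natAbs_of_nonneg hX.le
  have hHa : (H.natAbs : ℤ) = H := Int.natAbs_of_nonneg hH.le
  have hma : (m.natAbs : ℤ) = m := Int.natAbs_of_nonneg hm.le
  have hna : (n.natAbs : ℤ) = n := Int.natAbs_of_nonneg hn.le
  have heqN : X.natAbs * H.natAbs = m.natAbs * n.natAbs := by
    rw [← Int.natAbs_mul, ← Int.natAbs_mul, heq]
  obtain ⟨h1, h2, h3, h4⟩ := nat_four_split (hXH : Nat.Coprime _ _) (hmn : Nat.Coprime _ _) heqN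
  refine ⟨(Nat.gcd X.natAbs m.natAbs : ℤ), (Nat.gcd X.natAbs n.natAbs : ℤ),
    (Nat.gcd H.natAbs m.natAbs : ℤ), (Nat.gcd H.natAbs n.natAbs : ℤ), ?_, ?_, ?_, ?_, ?_, ?_, ?_, ?_⟩
  · exact_mod_cast Nat.gcd_pos_of_pos_left _ (Int.natAbs_pos.mpr hX.ne')
  · exact_mod_cast Nat.gcd_pos_of_pos_left _ (Int.natAbs_pos.mpr hX.ne')
  · exact_mod_cast Nat.gcd_pos_of_pos_left _ (Int.natAbs_pos.mpr hH.ne')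
  · exact_mod_cast Nat.gcd_pos_of_pos_left _ (Int.natAbs_pos.mpr hH.ne')
  · rw [← hXa]; exact_mod_cast congrArg (Nat.cast : ℕ → ℤ) h1
  · rw [← hHa]; exact_mod_cast congrArg (Nat.cast : ℕ → ℤ) h2
  · rw [← hma]; exact_mod_cast congrArg (Nat.cast : ℕ → ℤ) h3
  · rw [← hna]; exact_mod_cast congrArg (Nat.cast : ℕ → ℤ) h4

lemma one_le_sq {r : ℤ} (h : r ≠ 0) : (1:ℤ) ≤ r^2 := by
  have h1 : 1 ≤ |r| := Int.one_le_abs h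
  have h2 : |r| ≤ |r|^2 := le_self_pow₀ h1 (by norm_num)
  have h3 : |r|^2 = r^2 := sq_abs r
  linarith only [h1, h2, h3]

lemma mod8_k : ∀ (K : ZMod 8), (K = 1 ∨ K = -1 ∨ K = 3) →
    ∀ c d e : ZMod 8, (2*c+1)^2 - 4*(2*d+1)^2 ≠ (2*e+1)^2 * K := by decide

set_option maxHeartbeats 1000000 in
lemma descent_s14 {X Y Z : ℤ} (hX : 0 < X) (hY : 0 < Y) (hZ : 0 < Z)
    (hcop : Int.gcd X Y = 1) (hXodd : Odd X) (hYeven : Even Y)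
    (heq : X^4 + X^2*Y^2 + Y^4 = Z^2) :
    ∃ t w z' : ℤ, t ≠ 0 ∧ w ≠ 0 ∧ t^4 + t^2*w^2 + w^4 = z'^2 ∧ z'.natAbs < Z.natAbs := by
  have hcopI : IsCoprime X Y := Int.isCoprime_iff_gcd_eq_one.mpr hcop
  -- Z is odd
  have hZodd : Odd Z := by
    have h1 : Odd (Z^2) := by
      rw [← heq]
      have : Odd (X^4) := hXodd.pow
      have h2 : Even (X^2*Y^2) := (Int.even_pow.mpr ⟨hYeven, by norm_num⟩ : Even (Y^2)).mul_left _
      have h3 : Even (Y^4) := Int.even_pow.mpr ⟨hYeven, by norm_num⟩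
      exact (this.add_even h2).add_even h3
    exact (Int.odd_pow' (by norm_num)).mp h1
  -- Pythagorean triple (Z, X*Y, X^2+Y^2)
  have ht : PythagoreanTriple Z (X*Y) (X^2+Y^2) := by
    show Z*Z + (X*Y)*(X*Y) = (X^2+Y^2)*(X^2+Y^2)
    linear_combination -heq
  have hZX : IsCoprime Z X := by
    have h1 : IsCoprime (Y^4) X := (hcopI.symm.pow_left)
    have h2 : IsCoprime (Y^4 + X*(X^3 + X*Y^2)) X := h1.add_mul_left_left _
    have h3 : Y^4 + X*(X^3 + X*Y^2) = Z^2 := by linear_combination heq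
    rw [h3] at h2
    exact (IsCoprime.pow_left_iff (by norm_num)).mp h2
  have hZY : IsCoprime Z Y := by
    have h1 : IsCoprime (X^4) Y := (hcopI.pow_left)
    have h2 : IsCoprime (X^4 + Y*(X^2*Y + Y^3)) Y := h1.add_mul_left_left _
    have h3 : X^4 + Y*(X^2*Y + Y^3) = Z^2 := by linear_combination heq
    rw [h3] at h2
    exact (IsCoprime.pow_left_iff (by norm_num)).mp h2
  have hgcdZXY : Int.gcd Z (X*Y) = 1 :=
    Int.isCoprime_iff_gcd_eq_one.mp (hZX.mul_right hZY)
  obtain ⟨m, n, hZmn, hXYmn, hsum, hmn, hpar, hm0⟩ :=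
    ht.coprime_classification' hgcdZXY (Int.odd_iff.mp hZodd) (by positivity)
  -- m*n > 0
  have hmnpos : 0 < m * n := by
    have : 0 < X * Y := by positivity
    nlinarith [hXYmn]
  have hmpos : 0 < m := lt_of_le_of_ne hm0 (by rintro rfl; simp at hmnpos)
  have hnpos : 0 < n := by nlinarith
  -- arrange M odd, N even
  obtain ⟨M, N, hMpos, hNpos, hModd, hNeven, hMN, hXYMN, hsum2⟩ :
      ∃ M N : ℤ, 0 < M ∧ 0 < N ∧ Odd M ∧ Even N ∧ Int.gcd M N = 1 ∧
        X*Y = 2*(M*N) ∧ X^2+Y^2 = M^2+N^2 := by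
    rcases hpar with ⟨hm2, hn2⟩ | ⟨hm2, hn2⟩
    · exact ⟨n, m, hnpos, hmpos, Int.odd_iff.mpr hn2, Int.even_iff.mpr hm2,
        by rwa [Int.gcd_comm], by rw [hXYmn]; ring, by rw [hsum]; ring⟩
    · exact ⟨m, n, hmpos, hnpos, Int.odd_iff.mpr hm2, Int.even_iff.mpr hn2, hmn,
        by rw [hXYmn]; ring, hsum⟩
  -- Y = 2*H
  obtain ⟨H, hHdef⟩ : ∃ H, Y = 2*H := by
    obtain ⟨r, hr⟩ := hYeven; exact ⟨r, by linarith⟩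
  have hHpos : 0 < H := by linarith
  have hXH : X * H = M * N := by
    have : 2*(X*H) = 2*(M*N) := by rw [← hXYMN, hHdef]; ring
    linarith
  have hcopXH : Int.gcd X H = 1 := by
    rw [← Int.isCoprime_iff_gcd_eq_one]
    exact hcopI.of_isCoprime_of_dvd_right ⟨2, by linarith [hHdef]⟩
  obtain ⟨x₁, x₂, y₁, y₂, hx₁p, hx₂p, hy₁p, hy₂p, hXe, hHe, hMe, hNe⟩ :=
    int_four_split hX hHpos hMpos hNpos hcopXH hMN hXH
  -- parities
  have hx₁odd : Odd x₁ := (Int.odd_mul.mp (hXe ▸ hXodd)).1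
  have hx₂odd : Odd x₂ := (Int.odd_mul.mp (hXe ▸ hXodd)).2
  have hy₁odd : Odd y₁ := (Int.odd_mul.mp (hMe ▸ hModd)).2
  have hy₂even : Even y₂ := by
    rcases Int.even_mul.mp (hNe ▸ hNeven) with h | h
    · exact absurd h (Int.not_even_iff_odd.mpr hx₂odd)
    · exact h
  -- coprimalities
  have hcopMN : IsCoprime M N := Int.isCoprime_iff_gcd_eq_one.mpr hMN
  have hcopXHI : IsCoprime X H := Int.isCoprime_iff_gcd_eq_one.mpr hcopXH
  have c12 : IsCoprime x₁ x₂ :=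
    ((hcopMN.of_isCoprime_of_dvd_left ⟨y₁, hMe⟩).of_isCoprime_of_dvd_right ⟨y₂, hNe⟩)
  have cy1y2 : IsCoprime y₁ y₂ :=
    ((hcopMN.of_isCoprime_of_dvd_left ⟨x₁, by linarith [hMe]⟩).of_isCoprime_of_dvd_right
      ⟨x₂, by linarith [hNe]⟩)
  have cx1y2 : IsCoprime x₁ y₂ :=
    ((hcopXHI.of_isCoprime_of_dvd_left ⟨x₂, hXe⟩).of_isCoprime_of_dvd_right ⟨y₁, by linarith [hHe]⟩)
  have cx2y2 : IsCoprime x₂ y₂ :=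
    ((hcopXHI.of_isCoprime_of_dvd_left ⟨x₁, by linarith [hXe]⟩).of_isCoprime_of_dvd_right
      ⟨y₁, by linarith [hHe]⟩)
  have cy1x2 : IsCoprime y₁ x₂ :=
    ((hcopXHI.symm.of_isCoprime_of_dvd_left ⟨y₂, hHe⟩).of_isCoprime_of_dvd_right
      ⟨x₁, by linarith [hXe]⟩)
  -- the master equation
  have hE : x₁^2*(x₂^2 - y₁^2) = y₂^2*(x₂^2 - 4*y₁^2) := by
    rw [hXe, hHdef, hHe, hMe, hNe] at hsum2
    linear_combination hsum2
  -- extract k with x₂² - 4y₁² = x₁²·k and x₂² - y₁² = y₂²·k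
  have hdvd : x₁^2 ∣ x₂^2 - 4*y₁^2 := by
    have h1 : x₁^2 ∣ y₂^2 * (x₂^2 - 4*y₁^2) := ⟨x₂^2 - y₁^2, by linear_combination -hE⟩
    exact (cx1y2.pow : IsCoprime (x₁^2) (y₂^2)).dvd_of_dvd_mul_left h1
  obtain ⟨k, hk⟩ := hdvd
  have hk2 : x₂^2 - y₁^2 = y₂^2 * k := by
    have h1 : x₁^2 * (x₂^2 - y₁^2) = x₁^2 * (y₂^2 * k) := by
      rw [hE, hk]; ring
    exact mul_left_cancel₀ (by positivity) h1
  -- k divides 3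
  have hk3 : k ∣ 3 := by
    have d1 : k ∣ 3*y₁^2 := ⟨y₂^2 - x₁^2, by linear_combination hk2 - hk⟩
    have d2 : k ∣ 3*x₂^2 := ⟨4*y₂^2 - x₁^2, by linear_combination 4*hk2 - hk⟩
    obtain ⟨u, v, huv⟩ := (cy1x2.pow : IsCoprime (y₁^2) (x₂^2))
    have : (3:ℤ) = u*(3*y₁^2) + v*(3*x₂^2) := by linear_combination -3*huv
    rw [this]
    exact dvd_add (d1.mul_left u) (d2.mul_left v)
  -- k = -3 via mod 8
  obtain ⟨c, hc⟩ := id hx₂odd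
  obtain ⟨d, hd⟩ := id hy₁odd
  obtain ⟨e, he⟩ := id hx₁odd
  have hmod : ∀ K : ℤ, (K:ZMod 8) = 1 ∨ (K:ZMod 8) = -1 ∨ (K:ZMod 8) = 3 → k ≠ K := by
    intro K hK hkK
    have hcast := congrArg (fun i : ℤ => (i : ZMod 8)) hk
    rw [hc, hd, he, hkK] at hcast
    push_cast at hcast
    exact mod8_k (K:ZMod 8) hK (c:ZMod 8) d e hcast
  have hkval : k = -3 := by
    have hna : k.natAbs ∣ 3 := by
      have := Int.natAbs_dvd_natAbs.mpr hk3; simpa using this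
    have h13 : k.natAbs = 1 ∨ k.natAbs = 3 := (Nat.prime_three).eq_one_or_self_of_dvd _ hna
    rcases Int.natAbs_eq k with hk' | hk' <;> rcases h13 with h' | h' <;> rw [h'] at hk'
    · exact absurd hk' (hmod 1 (by norm_num))
    · exact absurd hk' (hmod 3 (by norm_num))
    · exact absurd hk' (hmod (-1) (by norm_num))
    · exact hk'
  subst hkval
  -- two new Pythagorean relations
  have hA : x₁^2 = y₁^2 + y₂^2 := by
    have h3 : (3:ℤ) * x₁^2 = 3 * (y₁^2 + y₂^2) := by linear_combination hk - hk2
    exact mul_left_cancel₀ (by norm_num) h3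
  have hB : x₁^2 = x₂^2 + (2*y₂)^2 := by linear_combination -hk + 4*hA - 3*hA + 3*hA
  -- classify the two new triples
  have pt1 : PythagoreanTriple y₁ y₂ x₁ := by
    show y₁*y₁ + y₂*y₂ = x₁*x₁
    linear_combination -hA
  have pt2 : PythagoreanTriple x₂ (2*y₂) x₁ := by
    show x₂*x₂ + (2*y₂)*(2*y₂) = x₁*x₁
    linear_combination -hB
  have gcd1 : Int.gcd y₁ y₂ = 1 := Int.isCoprime_iff_gcd_eq_one.mp cy1y2
  have gcd2 : Int.gcd x₂ (2*y₂) = 1 := by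
    rw [← Int.isCoprime_iff_gcd_eq_one]
    have h2 : IsCoprime x₂ 2 := ⟨1, -c, by rw [hc]; ring⟩
    exact h2.mul_right cx2y2
  obtain ⟨r, s, hy₁rs, hy₂rs, hx₁rs, hrs, hrspar, hr0⟩ :=
    pt1.coprime_classification' gcd1 (Int.odd_iff.mp hy₁odd) hx₁p
  obtain ⟨t, w, hx₂tw, h2y₂tw, hx₁tw, htw, htwpar, ht0⟩ :=
    pt2.coprime_classification' gcd2 (Int.odd_iff.mp hx₂odd) hx₁p
  -- nontriviality
  have hrsne : r * s ≠ 0 := by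
    intro h0
    rw [hy₂rs] at hy₂p
    rw [show (2:ℤ)*r*s = 2*(r*s) from by ring, h0] at hy₂p
    norm_num at hy₂p
  have htwne : t * w ≠ 0 := by
    intro h0
    have : 2*y₂ = 2*(t*w) := by rw [h2y₂tw]; ring
    rw [h0] at this
    norm_num at this
    linarith
  refine ⟨t, w, r^2 - s^2, fun h => htwne (by rw [h]; ring), fun h => htwne (by rw [h]; ring),
    ?_, ?_⟩
  · have e1 : t^2 + w^2 = r^2 + s^2 := by rw [← hx₁tw, ← hx₁rs]
    have e2 : t*w = 2*(r*s) := by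
      have : 2*y₂ = 2*(t*w) := by rw [h2y₂tw]; ring
      have h2 : 2*y₂ = 2*(2*(r*s)) := by rw [hy₂rs]; ring
      linarith
    linear_combination (t^2 + w^2 + r^2 + s^2) * e1 - (t*w + 2*r*s) * e2
  · -- size bound
    have hr2 : (1:ℤ) ≤ r^2 := one_le_sq (fun h => hrsne (by rw [h]; ring))
    have hs2 : (1:ℤ) ≤ s^2 := one_le_sq (fun h => hrsne (by rw [h]; ring))
    have hx₁leX : x₁ ≤ X := Int.le_of_dvd hX ⟨x₂, hXe⟩
    have hXX2 : X ≤ X^2 := le_self_pow₀ (by linarith only [hX]) (by norm_num)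
    have hX2Z : X^2 < Z := by
      have h0 : (0:ℤ) < X^2*Y^2 := by positivity
      have h0' : (0:ℤ) < Y^4 := by positivity
      have h1 : (X^2)^2 < Z^2 := by
        have : (X^2)^2 = X^4 := by ring
        linarith only [heq, h0, h0', this]
      exact lt_of_pow_lt_pow_left₀ 2 hZ.le h1
    have habs : |r^2 - s^2| < Z := by
      rw [abs_lt]
      constructor <;> linarith only [hr2, hs2, hx₁rs, hx₁leX, hXX2, hX2Z]
    have : (r^2 - s^2).natAbs < Z.natAbs := by
      rw [Int.abs_eq_natAbs] at habs
      rw [show Z = (Z.natAbs : ℤ) from (Int.natAbs_of_nonneg hZ.le).symm] at habs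
      exact_mod_cast habs
    exact this

lemma mod4_contra : ∀ a b c : ZMod 4,
    (2*a+1)^4 + (2*a+1)^2*(2*b+1)^2 + (2*b+1)^4 ≠ c^2 := by decide

lemma quartic_aux : ∀ N : ℕ, ∀ z x y : ℤ, z.natAbs = N →
    x^4 + x^2*y^2 + y^4 = z^2 → x = 0 ∨ y = 0 := by
  intro N
  induction N using Nat.strong_induction_on with
  | _ N IH =>
  intro z x y hN heq
  by_contra hcon
  push_neg at hcon
  obtain ⟨hx0, hy0⟩ := hcon
  -- positivize
  have ha : 0 < |x| := abs_pos.mpr hx0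
  have hb : 0 < |y| := abs_pos.mpr hy0
  have habs4 : ∀ u : ℤ, |u|^4 = u^4 := fun u => by
    rw [show (4:ℕ) = 2*2 from rfl, pow_mul, pow_mul, sq_abs]
  have heqa : |x|^4 + |x|^2*|y|^2 + |y|^4 = |z|^2 := by
    rw [habs4, habs4, sq_abs, sq_abs, sq_abs]; exact heq
  -- gcd reduction
  set g : ℕ := Int.gcd |x| |y| with hg
  have hgpos : 0 < g := Int.gcd_pos_of_ne_zero_left _ (by simpa using hx0)
  have hdX : (g:ℤ) ∣ |x| := Int.gcd_dvd_left _ _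
  have hdY : (g:ℤ) ∣ |y| := Int.gcd_dvd_right _ _
  obtain ⟨X, hX⟩ := hdX
  obtain ⟨Y, hY⟩ := hdY
  have hgz : (g:ℤ) ≠ 0 := by exact_mod_cast hgpos.ne'
  have hXpos : 0 < X := by
    rcases lt_trichotomy X 0 with h | h | h
    · nlinarith [hX, ha, (by exact_mod_cast hgpos : (0:ℤ) < g)]
    · rw [h, mul_zero] at hX; exact absurd hX ha.ne'
    · exact h
  have hYpos : 0 < Y := by
    rcases lt_trichotomy Y 0 with h | h | h
    · nlinarith [hY, hb, (by exact_mod_cast hgpos : (0:ℤ) < g)]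
    · rw [h, mul_zero] at hY; exact absurd hY hb.ne'
    · exact h
  have hcopXY : Int.gcd X Y = 1 := by
    have h1 : X = |x| / (g:ℤ) := by
      rw [hX]; rw [Int.mul_ediv_cancel_left _ hgz]
    have h2 : Y = |y| / (g:ℤ) := by
      rw [hY]; rw [Int.mul_ediv_cancel_left _ hgz]
    rw [h1, h2]
    exact Int.gcd_div_gcd_div_gcd hgpos
  -- c = g^2 * C
  have heqg : (g:ℤ)^4 * (X^4 + X^2*Y^2 + Y^4) = |z|^2 := by
    rw [← heqa, hX, hY]; ring
  have hd4 : ((g:ℤ)^2)^2 ∣ |z|^2 := ⟨X^4 + X^2*Y^2 + Y^4, by rw [← heqg]; ring⟩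
  have hd2 : (g:ℤ)^2 ∣ |z| := (Int.pow_dvd_pow_iff (two_ne_zero)).mp hd4
  obtain ⟨C, hC⟩ := hd2
  have heqX : X^4 + X^2*Y^2 + Y^4 = C^2 := by
    have h1 : (g:ℤ)^4 * (X^4 + X^2*Y^2 + Y^4) = (g:ℤ)^4 * C^2 := by
      rw [heqg, hC]; ring
    exact mul_left_cancel₀ (pow_ne_zero _ hgz) h1
  have hCne : C ≠ 0 := by
    intro h0
    rw [h0] at heqX
    nlinarith [pow_pos hXpos 4, pow_pos hYpos 4, mul_pos (pow_pos hXpos 2) (pow_pos hYpos 2)]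
  have hCpos : 0 < |C| := abs_pos.mpr hCne
  have heqC : X^4 + X^2*Y^2 + Y^4 = |C|^2 := by rw [sq_abs]; exact heqX
  -- |C| ≤ N bound
  have hCN : |C|.natAbs ≤ N := by
    have h1 : |z|.natAbs = ((g:ℤ)^2).natAbs * C.natAbs := by rw [hC, Int.natAbs_mul]
    have h2 : 1 ≤ ((g:ℤ)^2).natAbs := by
      have : ((g:ℤ)^2).natAbs = g^2 := by
        rw [Int.natAbs_pow]; simp
      rw [this]; exact Nat.one_le_iff_ne_zero.mpr (pow_ne_zero _ hgpos.ne')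
    have h3 : C.natAbs ≤ |z|.natAbs := by
      calc C.natAbs = 1 * C.natAbs := (one_mul _).symm
      _ ≤ ((g:ℤ)^2).natAbs * C.natAbs := Nat.mul_le_mul_right _ h2
      _ = |z|.natAbs := h1.symm
    rw [Int.natAbs_abs] at h3
    rw [Int.natAbs_abs]
    exact le_of_le_of_eq h3 hN
  -- parity cases
  have hfin : ∀ t w z' : ℤ, t ≠ 0 → w ≠ 0 → t^4 + t^2*w^2 + w^4 = z'^2 →
      z'.natAbs < |C|.natAbs → False := by
    intro t w z' ht hw heqt hlt
    have hltN : z'.natAbs < N := lt_of_lt_of_le hlt hCN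
    rcases IH z'.natAbs hltN z' t w rfl heqt with h | h
    · exact ht h
    · exact hw h
  rcases Int.even_or_odd X with hXe | hXo
  · rcases Int.even_or_odd Y with hYe | hYo
    · -- both even: contradicts coprime
      obtain ⟨i, hi⟩ := hXe
      obtain ⟨j, hj⟩ := hYe
      have h2 : (2:ℤ) ∣ ↑(Int.gcd X Y) :=
        Int.dvd_coe_gcd ⟨i, by linarith⟩ ⟨j, by linarith⟩
      rw [hcopXY] at h2
      norm_num at h2
    · -- X even, Y odd: descent on (Y, X)
      have heqswap : Y^4 + Y^2*X^2 + X^4 = |C|^2 := by linear_combination heqC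
      obtain ⟨t, w, z', ht, hw, heqt, hlt⟩ :=
        descent_s14 hYpos hXpos hCpos (by rwa [Int.gcd_comm]) hYo hXe heqswap
      exact hfin t w z' ht hw heqt hlt
  · rcases Int.even_or_odd Y with hYe | hYo
    · obtain ⟨t, w, z', ht, hw, heqt, hlt⟩ :=
        descent_s14 hXpos hYpos hCpos hcopXY hXo hYe heqC
      exact hfin t w z' ht hw heqt hlt
    · -- both odd: mod 4
      obtain ⟨i, hi⟩ := hXo
      obtain ⟨j, hj⟩ := hYo
      have hcast := congrArg (fun u : ℤ => (u : ZMod 4)) heqX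
      rw [hi, hj] at hcast
      push_cast at hcast
      exact mod4_contra (i : ZMod 4) j C hcast

lemma quartic (x y z : ℤ) (h : x^4 + x^2*y^2 + y^4 = z^2) : x = 0 ∨ y = 0 :=
  quartic_aux z.natAbs z x y rfl h

lemma mod16_contra : ∀ a b c : ZMod 16,
    ((2*a+1)^2 - 3*(2*b+1)^2) * ((2*a+1)^2 + (2*b+1)^2) ≠ c^2 := by decide

lemma lemB_core (Y T W : ℤ) (hcopI : IsCoprime Y T) (hT : T ≠ 0)
    (heq : (Y^2 - 3*T^2)*(Y^2 + T^2) = W^2)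
    (hYT2 : 0 < Y^2 - T^2) (hodd : Odd (Y^2 - T^2)) : False := by
  have hW2 : W^2 = (Y^2-T^2)^2 - 4*T^4 := by linear_combination -heq
  have hWodd : Odd W := by
    have h1 : Odd (W^2) := by
      rw [hW2]
      exact (hodd.pow).sub_even ⟨2*T^4, by ring⟩
    exact (Int.odd_pow' two_ne_zero).mp h1
  have pt : PythagoreanTriple W (2*T^2) (Y^2 - T^2) := by
    show W*W + (2*T^2)*(2*T^2) = (Y^2-T^2)*(Y^2-T^2)
    linear_combination -heq
  have hcopWT : IsCoprime W T := by
    have h1 : IsCoprime (Y^4) T := hcopI.pow_left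
    have h2 : IsCoprime (Y^4 + T*(-2*Y^2*T - 3*T^3)) T := h1.add_mul_left_left _
    have h3 : Y^4 + T*(-2*Y^2*T - 3*T^3) = W^2 := by linear_combination heq
    rw [h3] at h2
    exact (IsCoprime.pow_left_iff (by norm_num)).mp h2
  obtain ⟨k, hk⟩ := id hWodd
  have hcopW2 : IsCoprime W 2 := ⟨1, -k, by rw [hk]; ring⟩
  have hgcd : Int.gcd W (2*T^2) = 1 := by
    rw [← Int.isCoprime_iff_gcd_eq_one]
    exact hcopW2.mul_right (hcopWT.pow_right)
  obtain ⟨m, n, hWmn, hTmn, hsum, hmn, hpar, hm0⟩ :=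
    pt.coprime_classification' hgcd (Int.odd_iff.mp hWodd) hYT2
  have hT2 : T^2 = m*n := by linarith only [hTmn]
  have hmnpos : 0 < m*n := by rw [← hT2]; positivity
  have hmpos : 0 < m := lt_of_le_of_ne hm0 (by rintro rfl; simp at hmnpos)
  have hnpos : 0 < n := by
    rcases mul_pos_iff.mp hmnpos with ⟨_, h⟩ | ⟨h1, _⟩
    · exact h
    · linarith only [h1, hmpos]
  have hcmn : IsCoprime m n := Int.isCoprime_iff_gcd_eq_one.mpr hmn
  obtain ⟨α, hα⟩ := Int.sq_of_isCoprime hcmn hT2.symm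
  obtain ⟨β, hβ⟩ := Int.sq_of_isCoprime hcmn.symm (by rw [mul_comm]; exact hT2.symm)
  have hmα : m = α^2 := by
    rcases hα with h | h
    · exact h
    · exfalso; linarith only [hmpos, sq_nonneg α, h]
  have hnβ : n = β^2 := by
    rcases hβ with h | h
    · exact h
    · exfalso; linarith only [hnpos, sq_nonneg β, h]
  rw [hmα, hnβ] at hsum hT2
  have hfin : α^4 + α^2*β^2 + β^4 = Y^2 := by linear_combination -hsum - hT2
  rcases quartic α β Y hfin with h | h
  · rw [h] at hmα; simp at hmα; rw [hmα] at hmpos; norm_num at hmpos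
  · rw [h] at hnβ; simp at hnβ; rw [hnβ] at hnpos; norm_num at hnpos

lemma lemB_coprime (Y T W : ℤ) (hcop : Int.gcd Y T = 1) (hY : Y ≠ 0) (hT : T ≠ 0)
    (heq : (Y^2 - 3*T^2)*(Y^2 + T^2) = W^2) : False := by
  have hcopI : IsCoprime Y T := Int.isCoprime_iff_gcd_eq_one.mpr hcop
  have hpos : 0 < Y^2 + T^2 := by positivity
  have h0 : 0 ≤ Y^2 - 3*T^2 := by
    by_contra h
    push_neg at h
    have hneg : (Y^2 - 3*T^2)*(Y^2+T^2) < 0 := mul_neg_of_neg_of_pos h hpos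
    linarith only [hneg, sq_nonneg W, heq]
  have hstrict : 0 < Y^2 - 3*T^2 := by
    rcases lt_or_eq_of_le h0 with h | h
    · exact h
    · exfalso
      have h3Y : (3:ℤ) ∣ Y := by
        have : (3:ℤ) ∣ Y^2 := ⟨T^2, by linarith⟩
        exact Int.Prime.dvd_pow' (by norm_num) this
      obtain ⟨Y', hY'⟩ := h3Y
      have h3T : (3:ℤ) ∣ T := by
        have h9 : 3*T^2 = 9*Y'^2 := by linear_combination h + (Y+3*Y')*hY'
        have : (3:ℤ) ∣ T^2 := ⟨Y'^2, by linarith only [h9]⟩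
        exact Int.Prime.dvd_pow' (by norm_num) this
      have hd : (3:ℤ) ∣ ↑(Int.gcd Y T) := Int.dvd_coe_gcd ⟨Y', hY'⟩ h3T
      rw [hcop] at hd
      norm_num at hd
  have hYT2 : 0 < Y^2 - T^2 := by linarith only [hstrict, sq_nonneg T]
  -- parity
  rcases Int.even_or_odd Y with hYe | hYo
  · rcases Int.even_or_odd T with hTe | hTo
    · -- both even
      obtain ⟨i, hi⟩ := hYe
      obtain ⟨j, hj⟩ := hTe
      have h2 : (2:ℤ) ∣ ↑(Int.gcd Y T) := Int.dvd_coe_gcd ⟨i, by linarith⟩ ⟨j, by linarith⟩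
      rw [hcop] at h2
      norm_num at h2
    · -- Y even, T odd : Y² - T² odd, proceed
      exact lemB_core Y T W hcopI hT heq hYT2
        ((Int.even_pow.mpr ⟨hYe, two_ne_zero⟩).sub_odd (hTo.pow))
  · rcases Int.even_or_odd T with hTe | hTo
    · exact lemB_core Y T W hcopI hT heq hYT2
        ((hYo.pow).sub_even (Int.even_pow.mpr ⟨hTe, two_ne_zero⟩))
    · -- both odd: mod 16
      obtain ⟨i, hi⟩ := hYo
      obtain ⟨j, hj⟩ := hTo
      have hcast := congrArg (fun u : ℤ => (u : ZMod 16)) heq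
      rw [hi, hj] at hcast
      push_cast at hcast
      exact mod16_contra (i : ZMod 16) j W hcast

lemma lemB (Y T W : ℤ) (heq : (Y^2 - 3*T^2)*(Y^2 + T^2) = W^2) : Y = 0 ∨ T = 0 := by
  by_contra hcon
  push_neg at hcon
  obtain ⟨hY, hT⟩ := hcon
  obtain ⟨G, hGz, Y', T', hcop, hY', hT'⟩ :
      ∃ G : ℤ, G ≠ 0 ∧ ∃ Y' T', Int.gcd Y' T' = 1 ∧ Y = G*Y' ∧ T = G*T' := by
    obtain ⟨gz, hgzdef⟩ : ∃ gz:ℕ, Int.gcd Y T = gz := ⟨_, rfl⟩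
    have hgpos : 0 < gz := hgzdef ▸ Int.gcd_pos_of_ne_zero_left _ hY
    have hgz : ((gz : ℕ):ℤ) ≠ 0 := by exact_mod_cast hgpos.ne'
    obtain ⟨Y', hY'⟩ : ((gz : ℕ):ℤ) ∣ Y := hgzdef ▸ (Int.gcd_dvd_left _ _ : ((Int.gcd Y T:ℕ):ℤ) ∣ Y)
    obtain ⟨T', hT'⟩ : ((gz : ℕ):ℤ) ∣ T := hgzdef ▸ (Int.gcd_dvd_right _ _ : ((Int.gcd Y T:ℕ):ℤ) ∣ T)
    refine ⟨((gz : ℕ):ℤ), hgz, Y', T', ?_, hY', hT'⟩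
    have hG2 : Int.gcd Y T = gz * Int.gcd Y' T' := by
      conv_lhs => rw [hY', hT']
      rw [Int.gcd_mul_left]
      simp
    rw [hgzdef] at hG2
    have h1 : gz * 1 = gz * Int.gcd Y' T' := by
      rw [Nat.mul_one]; exact hG2
    exact (Nat.eq_of_mul_eq_mul_left hgpos h1).symm
  have heqg : G^4 * ((Y'^2 - 3*T'^2)*(Y'^2 + T'^2)) = W^2 := by
    rw [← heq, hY', hT']; ring
  have hd4 : (G^2)^2 ∣ W^2 := ⟨(Y'^2 - 3*T'^2)*(Y'^2 + T'^2), by rw [← heqg]; ring⟩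
  obtain ⟨W', hW'⟩ := (Int.pow_dvd_pow_iff two_ne_zero).mp hd4
  have heqW : (Y'^2 - 3*T'^2)*(Y'^2 + T'^2) = W'^2 := by
    have h1 : G^4 * ((Y'^2 - 3*T'^2)*(Y'^2 + T'^2)) = G^4 * W'^2 := by
      rw [heqg, hW']; ring
    exact mul_left_cancel₀ (pow_ne_zero _ hGz) h1
  exact lemB_coprime Y' T' W' hcop (fun h => hY (by rw [hY', h, mul_zero]))
    (fun h => hT (by rw [hT', h, mul_zero])) heqW

theorem no_resonance_on_axis (n₁ : ℤ) (hn : n₁ ≠ 0) : ((n₁, 0) : ℤ × ℤ) ∉ Lambda := by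
  rintro ⟨hne, x, y, hx, hnx, heq⟩
  simp only [Prod.fst, Prod.snd] at heq
  push_cast at heq
  have hxQ : (x:ℚ) ≠ 0 := Int.cast_ne_zero.mpr hx
  have hnQ : (n₁:ℚ) ≠ 0 := Int.cast_ne_zero.mpr hn
  have hbQ : (n₁:ℚ) - (x:ℚ) ≠ 0 := by
    have h := (Int.cast_ne_zero (α := ℚ)).mpr hnx
    push_cast at h
    intro h0; exact h (by linarith)
  have hd1 : (x:ℚ)^2 + (y:ℚ)^2 ≠ 0 := by
    have h1 : (x:ℚ)^2 ≠ 0 := pow_ne_zero _ hxQ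
    nlinarith [sq_nonneg (x:ℚ), sq_nonneg (y:ℚ), lt_of_le_of_ne (sq_nonneg (x:ℚ)) (Ne.symm h1)]
  have hd2 : ((n₁:ℚ)-(x:ℚ))^2 + ((0:ℚ)-(y:ℚ))^2 ≠ 0 := by
    have h1 : ((n₁:ℚ)-(x:ℚ))^2 ≠ 0 := pow_ne_zero _ hbQ
    nlinarith [lt_of_le_of_ne (sq_nonneg ((n₁:ℚ)-(x:ℚ))) (Ne.symm h1), sq_nonneg ((0:ℚ)-(y:ℚ))]
  field_simp at heq
  have key : ((y:ℚ)^2 - (x:ℚ)*((n₁:ℚ)-(x:ℚ)))^2 = (x:ℚ)*((n₁:ℚ)-(x:ℚ))*(n₁:ℚ)^2 := by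
    have keyn : (n₁:ℚ) * (((y:ℚ)^2 - (x:ℚ)*((n₁:ℚ)-(x:ℚ)))^2)
        = (n₁:ℚ) * ((x:ℚ)*((n₁:ℚ)-(x:ℚ))*(n₁:ℚ)^2) := by linear_combination heq
    exact mul_left_cancel₀ hnQ keyn
  have keyZ : (y^2 - x*(n₁-x))^2 = x*(n₁-x)*n₁^2 := by exact_mod_cast key
  -- x*(n₁-x) is a positive square
  have habne : x*(n₁-x) ≠ 0 := mul_ne_zero hx hnx
  have h2 : (0:ℤ) < n₁^2 := by positivity
  have h1 : (0:ℤ) ≤ x*(n₁-x)*n₁^2 := keyZ ▸ sq_nonneg _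
  have habpos : 0 < x*(n₁-x) := by
    rcases lt_trichotomy (x*(n₁-x)) 0 with h | h | h
    · exfalso; nlinarith [mul_neg_of_neg_of_pos h h2]
    · exact absurd h habne
    · exact h
  -- y ≠ 0
  have hy0 : y ≠ 0 := by
    intro h0
    rw [h0] at keyZ
    have hab : x*(n₁-x) * (x*(n₁-x)) = x*(n₁-x) * n₁^2 := by linear_combination keyZ
    have hab2 : x*(n₁-x) = n₁^2 := mul_left_cancel₀ habne hab
    have hb2 : (1:ℤ) ≤ (n₁-x)^2 := by nlinarith [sq_nonneg (n₁-x), Int.one_le_abs hnx, sq_abs (n₁-x), abs_nonneg (n₁-x)]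
    nlinarith [sq_nonneg (2*x + (n₁ - x)), hab2]
  -- extract t with t^2 = x*(n₁-x)
  have hdvd : n₁^2 ∣ (y^2 - x*(n₁-x))^2 := ⟨x*(n₁-x), by linear_combination keyZ⟩
  obtain ⟨t, ht⟩ := (Int.pow_dvd_pow_iff two_ne_zero).mp hdvd
  have ht2 : t^2 = x*(n₁-x) := by
    have hcan : n₁^2 * t^2 = n₁^2 * (x*(n₁-x)) := by
      linear_combination keyZ - (y^2 - x*(n₁-x) + n₁*t) * ht
    exact mul_left_cancel₀ (pow_ne_zero _ hn) hcan
  have htne : t ≠ 0 := by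
    intro h0
    rw [h0] at ht2
    exact habpos.ne' (by linarith [ht2])
  have hfinal : (y^2 - 3*t^2)*(y^2 + t^2) = (t*(2*x - n₁))^2 := by
    linear_combination (y^2 - t^2 + n₁*t)*(ht - ht2) - 4*t^2*ht2
  rcases lemB y t (t*(2*x - n₁)) hfinal with h | h
  · exact hy0 h
  · exact htne h
end
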